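/- arXiv:1807.05257 — 4 statements merged into one kernel-verified Lean document; each statement's English description precedes it below -/
import Mathlib

section
/- For every a in (0,1) and every odd positive integer k, the function h_{a,k}(x) = ψ⁽ᵏ⁾(x+a) - ψ⁽ᵏ⁾(x) - a·k!/x^{k+1} is strictly increasing and strictly concave on (0, ∞). -/
open Filter Topology Set

/-- The basic series `∑ 1/(x+n)^(m+1)`. -/
noncomputable def P (m : ℕ) (x : ℝ) : ℝ := ∑' n : ℕ, ((x + n) ^ (m + 1))⁻¹

lemma summable_aux {x : ℝ} (hx : 0 < x) {p : ℕ} (hp : 2 ≤ p) :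
    Summable fun n : ℕ => ((x + n) ^ p)⁻¹ := by
  have h1 : Summable fun n : ℕ => (((n : ℝ) + 1) ^ p)⁻¹ := by
    have h0 : Summable fun n : ℕ => ((n : ℝ) ^ p)⁻¹ :=
      Real.summable_nat_pow_inv.2 (by omega)
    have := (summable_nat_add_iff 1).2 h0
    simpa using this
  refine (summable_nat_add_iff 1).1 (Summable.of_nonneg_of_le (fun n => by positivity)
    (fun n => ?_) h1)
  have h2 : ((n : ℝ) + 1) ≤ x + (n + 1 : ℕ) := by push_cast; linarith
  have h3 : (0:ℝ) < (n : ℝ) + 1 := by positivity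
  exact inv_anti₀ (by positivity) (pow_le_pow_left₀ h3.le h2 p)

lemma P_le_P {m : ℕ} {x a : ℝ} (hm : 1 ≤ m) (hx : 0 < x) (ha : 0 < a) :
    P m (x + a) ≤ P m x := by
  refine Summable.tsum_le_tsum (fun n => ?_) (summable_aux (by linarith) (by omega))
    (summable_aux hx (by omega))
  have h1 : (0:ℝ) < x + n := by positivity
  exact inv_anti₀ (by positivity) (pow_le_pow_left₀ h1.le (by linarith) _)

lemma P_pos {m : ℕ} {x : ℝ} (hm : 1 ≤ m) (hx : 0 < x) : 0 < P m x := by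
  have hs := summable_aux (p := m + 1) hx (by omega)
  have h0 : (0:ℝ) < ((x + (0:ℕ)) ^ (m+1))⁻¹ := by positivity
  exact Summable.tsum_pos hs (fun n => by positivity) 0 h0

lemma hasDerivAt_P {m : ℕ} (hm : 1 ≤ m) {x : ℝ} (hx : 0 < x) :
    HasDerivAt (P m) (-((m:ℝ)+1) * P (m+1) x) x := by
  have hu : Summable fun n : ℕ => ((m:ℝ)+1) * ((x/2 + n) ^ (m + 2))⁻¹ :=
    (summable_aux (by linarith) (by omega)).mul_left _
  have key : HasDerivAt (fun z : ℝ => ∑' n : ℕ, ((z + n) ^ (m + 1))⁻¹)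
      (∑' n : ℕ, (-((m:ℝ)+1) * ((x + n) ^ (m + 2))⁻¹)) x := by
    refine hasDerivAt_tsum_of_isPreconnected (F := ℝ)
      (g := fun (n : ℕ) (y : ℝ) => ((y + n) ^ (m + 1))⁻¹)
      (g' := fun (n : ℕ) (y : ℝ) => -((m:ℝ)+1) * ((y + n) ^ (m + 2))⁻¹)
      (t := Ioi (x/2)) (y₀ := x) (y := x)
      hu isOpen_Ioi (convex_Ioi _).isPreconnected
      (fun n y hy => ?_) (fun n y hy => ?_) (half_lt_self hx)
      (summable_aux hx (by omega)) (half_lt_self hx)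
    · have hy0 : (0:ℝ) < y := lt_trans (half_pos hx) hy
      have hyn : (0:ℝ) < y + n := by positivity
      have h1 : HasDerivAt (fun z : ℝ => z + n) 1 y := (hasDerivAt_id y).add_const _
      have h2 : HasDerivAt (fun z : ℝ => (z + n) ^ (m+1))
          ((((m:ℝ)+1) * (y+n) ^ m) * 1) y := by
        simpa [Function.comp_def] using ((hasDerivAt_pow (m+1) (y + (n:ℝ))).comp y h1)
      have h3 := h2.inv (by positivity)
      have hpow : ((y+(n:ℝ)) ^ (m+1))^2 = (y+(n:ℝ))^(m+2) * (y+(n:ℝ))^m := by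
        rw [← pow_mul, ← pow_add]; congr 1; omega
      have heq : -(((m:ℝ)+1) * (y+(n:ℝ)) ^ m * 1) / ((y+(n:ℝ)) ^ (m+1)) ^ 2
          = -((m:ℝ)+1) * ((y+(n:ℝ)) ^ (m+2))⁻¹ := by
        rw [hpow]
        field_simp
      rw [heq] at h3
      exact h3
    · have hy' : x/2 < y := hy
      have hy0 : (0:ℝ) < y := lt_trans (half_pos hx) hy'
      have h1 : (0:ℝ) < x/2 + n := by positivity
      rw [Real.norm_eq_abs, abs_mul, abs_neg, abs_of_nonneg (by positivity : (0:ℝ) ≤ (m:ℝ)+1),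
        abs_of_nonneg (by positivity : (0:ℝ) ≤ ((y + (n:ℝ)) ^ (m + 2))⁻¹)]
      have h2 : ((y + (n:ℝ)) ^ (m+2))⁻¹ ≤ ((x/2 + (n:ℝ)) ^ (m+2))⁻¹ :=
        inv_anti₀ (by positivity) (pow_le_pow_left₀ h1.le (by linarith) _)
      exact mul_le_mul_of_nonneg_left h2 (by positivity)
  have : (∑' n : ℕ, (-((m:ℝ)+1) * ((x + n) ^ (m + 2))⁻¹)) = -((m:ℝ)+1) * P (m+1) x := by
    rw [tsum_mul_left]; rfl
  rw [this] at key
  exact key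

open Filter Topology Set

local notation "γ" => Real.eulerMascheroniConstant

noncomputable def fnaux (n : ℕ) (x : ℝ) : ℝ :=
  x * Real.log n + Real.log (Nat.factorial n) - ∑ i ∈ Finset.range (n+1), Real.log (x + i)

noncomputable def fnaux' (n : ℕ) (x : ℝ) : ℝ :=
  Real.log n - ∑ i ∈ Finset.range (n+1), (x + i)⁻¹

noncomputable def Laux (x : ℝ) : ℝ :=
  -γ + (-x⁻¹ + ∑' n : ℕ, (((n:ℝ)+1)⁻¹ - (x + ((n:ℝ)+1))⁻¹))

lemma le_of_termL {x : ℝ} (hx : 0 < x) (n : ℕ) :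
    ((n:ℝ)+1)⁻¹ - (x + ((n:ℝ)+1))⁻¹ ≤ x * (((n:ℝ)+1)^2)⁻¹ := by
  have h1 : (0:ℝ) < (n:ℝ)+1 := by positivity
  have h2 : (0:ℝ) < x + ((n:ℝ)+1) := by positivity
  have key : ((n:ℝ)+1)⁻¹ - (x + ((n:ℝ)+1))⁻¹ = x / (((n:ℝ)+1) * (x + ((n:ℝ)+1))) := by
    field_simp
    ring
  rw [key]
  calc x / (((n:ℝ)+1) * (x + ((n:ℝ)+1))) ≤ x / (((n:ℝ)+1) * ((n:ℝ)+1)) := by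
        apply div_le_div_of_nonneg_left hx.le (by positivity)
        nlinarith
    _ = x * (((n:ℝ)+1)^2)⁻¹ := by rw [div_eq_mul_inv, sq]

lemma termL_nonneg {x : ℝ} (hx : 0 < x) (n : ℕ) :
    0 ≤ ((n:ℝ)+1)⁻¹ - (x + ((n:ℝ)+1))⁻¹ := by
  have h1 : (0:ℝ) < (n:ℝ)+1 := by positivity
  have h2 : ((n:ℝ)+1) ≤ x + ((n:ℝ)+1) := by linarith
  have := inv_anti₀ h1 h2
  linarith

lemma summable_sq_shift : Summable fun n : ℕ => ((((n:ℝ)+1))^2)⁻¹ := by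
  have h0 : Summable fun n : ℕ => ((n : ℝ) ^ 2)⁻¹ := Real.summable_nat_pow_inv.2 one_lt_two
  have := (summable_nat_add_iff 1).2 h0
  simpa using this

lemma summable_L {x : ℝ} (hx : 0 < x) :
    Summable fun n : ℕ => (((n:ℝ)+1)⁻¹ - (x + ((n:ℝ)+1))⁻¹) :=
  Summable.of_nonneg_of_le (termL_nonneg hx) (le_of_termL hx) (summable_sq_shift.mul_left x)

lemma hasDerivAt_fnaux (n : ℕ) {x : ℝ} (hx : 0 < x) :
    HasDerivAt (fnaux n) (fnaux' n x) x := by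
  have h1 : HasDerivAt (fun x : ℝ => x * Real.log n + Real.log (Nat.factorial n))
      (Real.log n) x := by
    simpa using (hasDerivAt_mul_const (Real.log n)).add_const (Real.log (Nat.factorial n))
  have h2 : HasDerivAt (fun x : ℝ => ∑ i ∈ Finset.range (n+1), Real.log (x + i))
      (∑ i ∈ Finset.range (n+1), (x + i)⁻¹) x := by
    apply HasDerivAt.fun_sum
    intro i _
    have hxi : x + (i:ℝ) ≠ 0 := by positivity
    simpa [Function.comp_def] using (Real.hasDerivAt_log hxi).comp x ((hasDerivAt_id x).add_const (i:ℝ))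
  exact h1.sub h2

lemma tendsto_fnaux {x : ℝ} (hx : 0 < x) :
    Tendsto (fun n => fnaux n x) atTop (𝓝 (Real.log (Real.Gamma x))) := by
  have hG : Tendsto (fun n => Real.log (Real.GammaSeq x n)) atTop
      (𝓝 (Real.log (Real.Gamma x))) :=
    ((Real.continuousAt_log (Real.Gamma_pos_of_pos hx).ne').tendsto).comp
      (Real.GammaSeq_tendsto_Gamma x)
  apply hG.congr'
  filter_upwards [eventually_ge_atTop 1] with n hn
  have hn0 : (0:ℝ) < n := by exact_mod_cast hn
  have hprod : (0:ℝ) < ∏ j ∈ Finset.range (n + 1), (x + j) :=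
    Finset.prod_pos fun j _ => by positivity
  rw [Real.GammaSeq, Real.log_div (by positivity) hprod.ne', Real.log_mul (by positivity)
    (by exact_mod_cast (Nat.factorial_pos n).ne'), Real.log_rpow hn0,
    Real.log_prod (fun j _ => by positivity)]
  rfl

lemma fnaux'_eq (n : ℕ) (x : ℝ) :
    fnaux' n x = (Real.log n - ∑ i ∈ Finset.range n, ((i:ℝ)+1)⁻¹)
      + (-x⁻¹ + ∑ i ∈ Finset.range n, (((i:ℝ)+1)⁻¹ - (x + ((i:ℝ)+1))⁻¹)) := by
  rw [fnaux', Finset.sum_range_succ' (fun i => (x + (i:ℝ))⁻¹)]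
  push_cast
  rw [Finset.sum_sub_distrib]
  ring

lemma tendsto_log_sub_harmonic :
    Tendsto (fun n : ℕ => Real.log n - ∑ i ∈ Finset.range n, ((i:ℝ)+1)⁻¹) atTop (𝓝 (-γ)) := by
  have h2 : Tendsto (fun n : ℕ => -((harmonic n : ℝ) - Real.log n)) atTop (𝓝 (-γ)) :=
    Real.tendsto_harmonic_sub_log.neg
  apply h2.congr
  intro n
  have : (harmonic n : ℝ) = ∑ i ∈ Finset.range n, ((i:ℝ)+1)⁻¹ := by
    simp only [harmonic]
    push_cast
    rfl
  rw [this]; ring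

lemma unif_const {α : Type*} {c : ℕ → ℝ} {l : ℝ} (h : Tendsto c atTop (𝓝 l)) (s : Set α) :
    TendstoUniformlyOn (fun n (_ : α) => c n) (fun _ => l) atTop s := by
  rw [Metric.tendstoUniformlyOn_iff]
  intro ε hε
  obtain ⟨N, hN⟩ := Metric.tendsto_atTop.1 h ε hε
  filter_upwards [eventually_ge_atTop N] with n hn y _
  rw [dist_comm]
  exact hN n hn

lemma unif_fixed {α : Type*} (F : α → ℝ) (s : Set α) :
    TendstoUniformlyOn (fun (_ : ℕ) x => F x) F atTop s := by
  rw [Metric.tendstoUniformlyOn_iff]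
  intro ε hε
  filter_upwards with n y _
  simpa using hε

lemma tlu_fnaux' : TendstoLocallyUniformlyOn fnaux' Laux atTop (Ioi 0) := by
  intro u hu x hx
  have hx0 : (0:ℝ) < x := hx
  have hsum : TendstoUniformlyOn
      (fun N (y : ℝ) => ∑ i ∈ Finset.range N, (((i:ℝ)+1)⁻¹ - (y + ((i:ℝ)+1))⁻¹))
      (fun y : ℝ => ∑' i : ℕ, (((i:ℝ)+1)⁻¹ - (y + ((i:ℝ)+1))⁻¹)) atTop (Ioo 0 (x+1)) := by
    apply tendstoUniformlyOn_tsum_nat (u := fun i : ℕ => (x+1) * (((i:ℝ)+1)^2)⁻¹)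
      (summable_sq_shift.mul_left _)
    intro i y hy
    rw [Real.norm_eq_abs, abs_of_nonneg (termL_nonneg hy.1 i)]
    calc ((i:ℝ)+1)⁻¹ - (y + ((i:ℝ)+1))⁻¹ ≤ y * (((i:ℝ)+1)^2)⁻¹ := le_of_termL hy.1 i
      _ ≤ (x+1) * (((i:ℝ)+1)^2)⁻¹ :=
          mul_le_mul_of_nonneg_right (le_of_lt hy.2) (by positivity)
  have hinv : TendstoUniformlyOn (fun (_ : ℕ) (y:ℝ) => -y⁻¹) (fun y : ℝ => -y⁻¹) atTop
      (Ioo 0 (x+1)) := unif_fixed _ _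
  have hconst := unif_const tendsto_log_sub_harmonic (Ioo 0 (x+1) : Set ℝ)
  have hadd := hconst.add (hinv.add hsum)
  have h2 := hadd.congr (by
    filter_upwards with n
    intro y hy
    simp only [Pi.add_apply]
    exact (fnaux'_eq n y).symm)
  refine ⟨Ioo 0 (x+1), mem_nhdsWithin_of_mem_nhds (Ioo_mem_nhds hx0 (lt_add_one x)), ?_⟩
  exact h2 u hu

lemma hasDerivAt_logGamma {x : ℝ} (hx : 0 < x) :
    HasDerivAt (fun x => Real.log (Real.Gamma x)) (Laux x) x := by
  refine hasDerivAt_of_tendstoLocallyUniformlyOn isOpen_Ioi tlu_fnaux'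
    (Eventually.of_forall fun n y hy => hasDerivAt_fnaux n hy) (fun y hy => tendsto_fnaux hy) hx
noncomputable def digamma : ℝ → ℝ := deriv (fun x => Real.log (Real.Gamma x))

noncomputable def polygamma (n : ℕ) : ℝ → ℝ := deriv^[n] digamma

lemma digamma_eq {x : ℝ} (hx : 0 < x) : digamma x = Laux x :=
  (hasDerivAt_logGamma hx).deriv

lemma summable_shift {x : ℝ} (hx : 0 < x) {p : ℕ} (hp : 2 ≤ p) :
    Summable fun n : ℕ => ((x + ((n:ℝ)+1)) ^ p)⁻¹ := by
  refine (summable_aux (x := x + 1) (by linarith) hp).congr fun n => ?_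
  ring_nf

lemma hasDerivAt_Laux {x : ℝ} (hx : 0 < x) : HasDerivAt Laux (P 1 x) x := by
  have hT : HasDerivAt (fun y : ℝ => ∑' n : ℕ, (((n:ℝ)+1)⁻¹ - (y + ((n:ℝ)+1))⁻¹))
      (∑' n : ℕ, ((x + ((n:ℝ)+1))^2)⁻¹) x := by
    have hu : Summable fun n : ℕ => ((x/2 + ((n:ℝ)+1)) ^ 2)⁻¹ :=
      summable_shift (half_pos hx) le_rfl
    refine hasDerivAt_tsum_of_isPreconnected (F := ℝ)
      (g := fun (n : ℕ) (y : ℝ) => ((n:ℝ)+1)⁻¹ - (y + ((n:ℝ)+1))⁻¹)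
      (g' := fun (n : ℕ) (y : ℝ) => ((y + ((n:ℝ)+1))^2)⁻¹)
      (t := Ioi (x/2)) (y₀ := x) (y := x)
      hu isOpen_Ioi (convex_Ioi _).isPreconnected
      (fun n y hy => ?_) (fun n y hy => ?_) (half_lt_self hx)
      (summable_L hx) (half_lt_self hx)
    · have hy0 : (0:ℝ) < y := lt_trans (half_pos hx) hy
      have hc : y + ((n:ℝ)+1) ≠ 0 := by positivity
      have h1 : HasDerivAt (fun y : ℝ => (y + ((n:ℝ)+1))⁻¹)
          (-(1 / (y + ((n:ℝ)+1))^2)) y := by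
        have := ((hasDerivAt_id y).add_const ((n:ℝ)+1)).inv hc
        simpa [neg_div, Pi.inv_def] using this
      have h2 := (hasDerivAt_const y (((n:ℝ)+1)⁻¹)).sub h1
      simpa [one_div, Pi.sub_def] using h2
    · have hy0 : (0:ℝ) < y := lt_trans (half_pos hx) hy
      have hy' : x/2 < y := hy
      have h1 : (0:ℝ) < x/2 + ((n:ℝ)+1) := by positivity
      rw [Real.norm_eq_abs, abs_of_nonneg (by positivity)]
      exact inv_anti₀ (by positivity) (pow_le_pow_left₀ h1.le (by linarith) _)
  have hinv : HasDerivAt (fun y : ℝ => -y⁻¹) ((x^2)⁻¹) x := by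
    simpa [Pi.neg_def] using (hasDerivAt_inv hx.ne').neg
  have h := (hasDerivAt_const x (-Real.eulerMascheroniConstant)).add (hinv.add hT)
  have hP : P 1 x = (x^2)⁻¹ + ∑' n : ℕ, ((x + ((n:ℝ)+1))^2)⁻¹ := by
    have hs : Summable fun n : ℕ => ((x + (n:ℝ)) ^ 2)⁻¹ := by
      have := summable_aux (x := x) hx (p := 2) le_rfl
      exact this
    have := Summable.tsum_eq_zero_add hs
    rw [P]
    norm_num at this ⊢
    rw [this]
  rw [show (0:ℝ) + ((x^2)⁻¹ + ∑' n : ℕ, ((x + ((n:ℝ)+1))^2)⁻¹)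
      = (x^2)⁻¹ + ∑' n : ℕ, ((x + ((n:ℝ)+1))^2)⁻¹ from zero_add _] at h
  rw [hP]
  exact h

noncomputable def Fm (m : ℕ) (x : ℝ) : ℝ :=
  (-1:ℝ)^(m+1) * (Nat.factorial m : ℝ) * P m x

lemma hasDerivAt_Fm {m : ℕ} (hm : 1 ≤ m) {x : ℝ} (hx : 0 < x) :
    HasDerivAt (Fm m) (Fm (m+1) x) x := by
  have h := (hasDerivAt_P hm hx).const_mul ((-1:ℝ)^(m+1) * (Nat.factorial m : ℝ))
  have heq : (-1:ℝ)^(m+1) * (Nat.factorial m : ℝ) * (-((m:ℝ)+1) * P (m+1) x)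
      = Fm (m+1) x := by
    rw [Fm, Nat.factorial_succ, pow_succ]
    push_cast
    ring
  rw [heq] at h
  exact h

lemma polygamma_succ_eq (m : ℕ) : ∀ {x : ℝ}, 0 < x → polygamma (m+1) x = Fm (m+1) x := by
  induction m with
  | zero =>
    intro x hx
    have hdig : digamma =ᶠ[𝓝 x] Laux := by
      filter_upwards [isOpen_Ioi.mem_nhds hx] with y hy
      exact digamma_eq hy
    show deriv^[1] digamma x = Fm 1 x
    rw [Function.iterate_one, hdig.deriv_eq, (hasDerivAt_Laux hx).deriv, Fm]
    norm_num
  | succ m ih =>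
    intro x hx
    have hpoly : polygamma (m+1) =ᶠ[𝓝 x] Fm (m+1) := by
      filter_upwards [isOpen_Ioi.mem_nhds hx] with y hy
      exact ih hy
    show deriv^[m+1+1] digamma x = Fm (m+1+1) x
    rw [Function.iterate_succ_apply']
    show deriv (polygamma (m+1)) x = Fm (m+1+1) x
    rw [hpoly.deriv_eq]
    exact (hasDerivAt_Fm (Nat.le_add_left 1 m) hx).deriv

lemma hasDerivAt_polygamma (m : ℕ) {x : ℝ} (hx : 0 < x) :
    HasDerivAt (polygamma (m+1)) (Fm (m+2) x) x := by
  have hpoly : polygamma (m+1) =ᶠ[𝓝 x] Fm (m+1) := by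
    filter_upwards [isOpen_Ioi.mem_nhds hx] with y hy
    exact polygamma_succ_eq m hy
  exact (hasDerivAt_Fm (Nat.le_add_left 1 m) hx).congr_of_eventuallyEq hpoly

lemma hasDerivAt_div_pow (b : ℝ) (n : ℕ) {y : ℝ} (hy : y ≠ 0) :
    HasDerivAt (fun y : ℝ => b / y ^ (n+1)) (-(b * ((n:ℝ)+1) / y ^ (n+2))) y := by
  have h1 : HasDerivAt (fun y : ℝ => y ^ (n+1)) (((n:ℝ)+1) * y ^ n) y := by
    have := hasDerivAt_pow (n+1) y
    norm_num at this
    convert this using 1 <;> try push_cast <;> try ring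
  have h3 := (h1.inv (pow_ne_zero _ hy)).const_mul b
  have hpow : (y^(n+1))^2 = y^(n+2) * y^n := by
    rw [← pow_mul, ← pow_add]; congr 1; omega
  have heq : b * (-(((n:ℝ)+1) * y ^ n) / (y^(n+1))^2) = -(b * ((n:ℝ)+1) / y ^ (n+2)) := by
    rw [hpow]; field_simp
  rw [heq] at h3
  refine h3.congr_of_eventuallyEq (Eventually.of_forall fun z => ?_)
  simp [div_eq_mul_inv]

theorem stmt_16 (a : ℝ) (ha : a ∈ Set.Ioo (0:ℝ) 1) (k : ℕ) (hk : Odd k) :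
    StrictMonoOn (fun y : ℝ =>
      polygamma k (y + a) - polygamma k y - a * (Nat.factorial k : ℝ) / y ^ (k + 1))
      (Set.Ioi 0) ∧
    StrictConcaveOn ℝ (Set.Ioi 0) (fun y : ℝ =>
      polygamma k (y + a) - polygamma k y - a * (Nat.factorial k : ℝ) / y ^ (k + 1)) := by
  obtain ⟨ha0, ha1⟩ := ha
  obtain ⟨j, hj⟩ := hk
  obtain ⟨m, rfl⟩ : ∃ m, k = m + 1 := ⟨k - 1, by omega⟩
  have hmj : m = 2 * j := by omega
  have hsign2 : ((-1:ℝ))^(m+2+1) = -1 := Odd.neg_one_pow (by rw [hmj]; exact ⟨j+1, by ring⟩)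
  have hsign3 : ((-1:ℝ))^(m+3+1) = 1 := Even.neg_one_pow (by rw [hmj]; exact ⟨j+2, by ring⟩)
  set h : ℝ → ℝ := fun y : ℝ =>
      polygamma (m+1) (y + a) - polygamma (m+1) y
        - a * (Nat.factorial (m+1) : ℝ) / y ^ (m + 1 + 1) with hh
  set c : ℝ := a * (Nat.factorial (m+1) : ℝ) with hcdef
  have hfac : (0:ℝ) < (Nat.factorial (m+1) : ℝ) := by exact_mod_cast Nat.factorial_pos (m+1)
  have hc : 0 < c := mul_pos ha0 hfac
  -- first derivative
  set φ : ℝ → ℝ := fun y : ℝ =>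
      Fm (m+2) (y + a) - Fm (m+2) y + c * ((m:ℝ)+2) / y ^ (m+3) with hφ
  set ψ : ℝ → ℝ := fun y : ℝ =>
      Fm (m+3) (y + a) - Fm (m+3) y - c * ((m:ℝ)+2) * ((m:ℝ)+3) / y ^ (m+4) with hψ
  have Hh : ∀ y ∈ Ioi (0:ℝ), HasDerivAt h (φ y) y := by
    intro y hy
    have hy0 : (0:ℝ) < y := hy
    have t1 : HasDerivAt (fun y : ℝ => polygamma (m+1) (y + a)) (Fm (m+2) (y+a)) y := by
      have := (hasDerivAt_polygamma m (show 0 < y + a by linarith)).comp y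
        ((hasDerivAt_id y).add_const a)
      simpa [Function.comp_def] using this
    have t2 : HasDerivAt (polygamma (m+1)) (Fm (m+2) y) y := hasDerivAt_polygamma m hy0
    have t3 : HasDerivAt (fun y : ℝ => a * (Nat.factorial (m+1) : ℝ) / y ^ (m+1+1))
        (-(a * (Nat.factorial (m+1) : ℝ) * (((m+1:ℕ):ℝ)+1) / y ^ (m+1+2))) y :=
      hasDerivAt_div_pow _ (m+1) hy0.ne'
    have := (t1.sub t2).sub t3
    simp only [Pi.sub_def] at this
    refine this.congr_deriv ?_
    rw [hφ, hcdef]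
    push_cast
    ring
  have Hφ : ∀ y ∈ Ioi (0:ℝ), HasDerivAt φ (ψ y) y := by
    intro y hy
    have hy0 : (0:ℝ) < y := hy
    have t1 : HasDerivAt (fun y : ℝ => Fm (m+2) (y + a)) (Fm (m+3) (y+a)) y := by
      have := (hasDerivAt_Fm (m := m+2) (by omega) (show 0 < y + a by linarith)).comp y
        ((hasDerivAt_id y).add_const a)
      simpa [Function.comp_def] using this
    have t2 : HasDerivAt (Fm (m+2)) (Fm (m+3) y) y := hasDerivAt_Fm (by omega) hy0
    have t3 : HasDerivAt (fun y : ℝ => c * ((m:ℝ)+2) / y ^ (m+2+1))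
        (-(c * ((m:ℝ)+2) * (((m+2:ℕ):ℝ)+1) / y ^ (m+2+2))) y :=
      hasDerivAt_div_pow _ (m+2) hy0.ne'
    have := (t1.sub t2).add t3
    simp only [Pi.sub_def, Pi.add_def] at this
    refine this.congr_deriv ?_
    rw [hψ]
    push_cast
    ring
  have hφpos : ∀ y ∈ Ioi (0:ℝ), 0 < φ y := by
    intro y hy
    have hy0 : (0:ℝ) < y := hy
    have hP := P_le_P (m := m+2) (by omega) hy0 ha0
    have hfac2 : (0:ℝ) < (Nat.factorial (m+2) : ℝ) := by exact_mod_cast Nat.factorial_pos _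
    have hterm : 0 < c * ((m:ℝ)+2) / y ^ (m+3) :=
      div_pos (mul_pos hc (by positivity)) (pow_pos hy0 _)
    have hdiff : 0 ≤ Fm (m+2) (y+a) - Fm (m+2) y := by
      rw [Fm, Fm, hsign2]
      nlinarith
    rw [hφ]
    simp only
    linarith
  have hψneg : ∀ y ∈ Ioi (0:ℝ), ψ y < 0 := by
    intro y hy
    have hy0 : (0:ℝ) < y := hy
    have hP := P_le_P (m := m+3) (by omega) hy0 ha0
    have hfac3 : (0:ℝ) < (Nat.factorial (m+3) : ℝ) := by exact_mod_cast Nat.factorial_pos _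
    have hterm : 0 < c * ((m:ℝ)+2) * ((m:ℝ)+3) / y ^ (m+4) :=
      div_pos (mul_pos (mul_pos hc (by positivity)) (by positivity)) (pow_pos hy0 _)
    have hdiff : Fm (m+3) (y+a) - Fm (m+3) y ≤ 0 := by
      rw [Fm, Fm, hsign3]
      nlinarith
    rw [hψ]
    simp only
    linarith
  have hcont : ContinuousOn h (Ioi 0) :=
    fun y hy => (Hh y hy).continuousAt.continuousWithinAt
  constructor
  · apply strictMonoOn_of_deriv_pos (convex_Ioi 0) hcont
    intro y hy
    rw [interior_Ioi] at hy
    rw [(Hh y hy).deriv]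
    exact hφpos y hy
  · apply strictConcaveOn_of_deriv2_neg (convex_Ioi 0) hcont
    intro y hy
    rw [interior_Ioi] at hy
    have e1 : deriv h =ᶠ[𝓝 y] φ := by
      filter_upwards [isOpen_Ioi.mem_nhds hy] with z hz
      exact (Hh z hz).deriv
    show deriv (deriv h) y < 0
    rw [e1.deriv_eq, (Hφ y hy).deriv]
    exact hψneg y hy
end

section
/- For every a in (0,1), every odd positive integer k, and every x > 1, ψ⁽ᵏ⁾(a) - ψ⁽ᵏ⁾(1) + k!·(a/x^{k+1} - 1/a^{k+1} - a) < ψ⁽ᵏ⁾(x+a) - ψ⁽ᵏ⁾(x) < a·k!/x^{k+1}. -/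
set_option maxHeartbeats 1000000

open Filter Topology Set Finset Real

namespace Stmt17

/-- The basic series `∑ 1/(n+x)^p`. -/
noncomputable def S (p : ℕ) (x : ℝ) : ℝ := ∑' n : ℕ, 1 / ((n : ℝ) + x) ^ p

lemma summable_S {t : ℝ} (ht : 0 < t) {p : ℕ} (hp : 2 ≤ p) :
    Summable (fun n : ℕ => 1 / ((n : ℝ) + t) ^ p) := by
  have hc : 0 < min t 1 := lt_min ht one_pos
  have hbase : Summable (fun n : ℕ => 1 / ((n : ℝ) + 1) ^ 2) := by
    have := (summable_nat_add_iff (f := fun n : ℕ => 1 / (n : ℝ) ^ 2) 1).mpr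
      (Real.summable_one_div_nat_pow.mpr one_lt_two)
    refine this.congr fun n => ?_
    push_cast; ring
  refine Summable.of_nonneg_of_le (fun n => by positivity) (fun n => ?_)
    (hbase.mul_left (1 / (min t 1) ^ p))
  have hn : (0:ℝ) ≤ n := n.cast_nonneg
  have h1 : min t 1 * ((n : ℝ) + 1) ≤ (n : ℝ) + t := by
    rcases le_total t 1 with h | h
    · rw [min_eq_left h]; nlinarith
    · rw [min_eq_right h]; nlinarith
  have hn1 : (1:ℝ) ≤ (n : ℝ) + 1 := by linarith
  have h2 : (min t 1) ^ p * ((n : ℝ) + 1) ^ 2 ≤ ((n : ℝ) + t) ^ p := by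
    calc (min t 1) ^ p * ((n : ℝ) + 1) ^ 2 ≤ (min t 1) ^ p * ((n : ℝ) + 1) ^ p :=
          mul_le_mul_of_nonneg_left (pow_le_pow_right₀ hn1 hp) (by positivity)
      _ = (min t 1 * ((n : ℝ) + 1)) ^ p := (mul_pow _ _ _).symm
      _ ≤ ((n : ℝ) + t) ^ p := pow_le_pow_left₀ (by positivity) h1 p
  rw [one_div_mul_one_div]
  exact one_div_le_one_div_of_le (by positivity) h2

lemma hasDerivAt_one_div_pow {p : ℕ} (hp : 1 ≤ p) {c y : ℝ} (h : 0 < c + y) :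
    HasDerivAt (fun z => 1 / (c + z) ^ p) (-(p : ℝ) / (c + y) ^ (p + 1)) y := by
  have h1 : HasDerivAt (fun z : ℝ => c + z) 1 y := (hasDerivAt_id y).const_add c
  have h2 : HasDerivAt (fun z : ℝ => (c + z) ^ p) ((p : ℝ) * (c + y) ^ (p - 1) * 1) y := h1.pow p
  have h3 := h2.inv (by positivity : (c + y) ^ p ≠ 0)
  have key : -((p : ℝ) * (c + y) ^ (p - 1) * 1) / ((c + y) ^ p) ^ 2
      = -(p : ℝ) / (c + y) ^ (p + 1) := by
    rw [mul_one, ← pow_mul, neg_div, neg_div, neg_inj, div_eq_div_iff (by positivity) (by positivity)]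
    rw [mul_assoc, ← pow_add]
    congr 2
    omega
  rw [key] at h3
  refine h3.congr_of_eventuallyEq ?_
  filter_upwards [] with z using by rw [one_div]; rfl

/-- The series defining `digamma x - digamma 1`. -/
noncomputable def dser (x : ℝ) : ℝ := ∑' n : ℕ, (1 / ((n : ℝ) + 1) - 1 / ((n : ℝ) + x))

lemma dser_aux {x : ℝ} (hx : 0 < x) :
    Summable (fun n : ℕ => 1 / ((n : ℝ) + 1) - 1 / ((n : ℝ) + x)) ∧
    HasDerivAt dser (∑' n : ℕ, 1 / ((n : ℝ) + x) ^ 2) x := by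
  set δ : ℝ := min x 1 / 2 with hδ
  have hδ0 : 0 < δ := by positivity
  have hxδ : x ∈ Ioi δ := by
    simp only [Set.mem_Ioi, hδ]
    have : min x 1 ≤ x := min_le_left _ _
    linarith [lt_min hx one_pos]
  have h1δ : (1:ℝ) ∈ Ioi δ := by
    simp only [Set.mem_Ioi, hδ]
    have : min x 1 ≤ 1 := min_le_right _ _
    linarith [lt_min hx one_pos]
  have hu : Summable (fun n : ℕ => 1 / ((n : ℝ) + δ) ^ 2) := summable_S hδ0 le_rfl
  have hg : ∀ (n : ℕ) (y : ℝ), y ∈ Ioi δ →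
      HasDerivAt (fun z => 1 / ((n : ℝ) + 1) - 1 / ((n : ℝ) + z)) (1 / ((n : ℝ) + y) ^ 2) y := by
    intro n y hy
    have hpos : 0 < (n : ℝ) + y := by
      have hn2 : (0:ℝ) ≤ n := n.cast_nonneg
      simp only [Set.mem_Ioi] at hy; linarith
    have := (hasDerivAt_one_div_pow le_rfl (c := (n : ℝ)) hpos).const_sub (1 / ((n : ℝ) + 1))
    simpa [neg_div] using this
  have hg' : ∀ (n : ℕ) (y : ℝ), y ∈ Ioi δ →
      ‖1 / ((n : ℝ) + y) ^ 2‖ ≤ 1 / ((n : ℝ) + δ) ^ 2 := by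
    intro n y hy
    simp only [Set.mem_Ioi] at hy
    have hn : (0:ℝ) ≤ n := n.cast_nonneg
    rw [Real.norm_eq_abs, abs_of_nonneg (by positivity)]
    exact one_div_le_one_div_of_le (by positivity) (by nlinarith)
  have hg0 : Summable (fun n : ℕ => 1 / ((n : ℝ) + 1) - 1 / ((n : ℝ) + (1:ℝ))) := by
    refine summable_zero.congr fun n => ?_
    simp
  constructor
  · exact summable_of_summable_hasDerivAt_of_isPreconnected hu isOpen_Ioi
      (convex_Ioi δ).isPreconnected hg hg' h1δ hg0 hxδ
  · exact hasDerivAt_tsum_of_isPreconnected hu isOpen_Ioi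
      (convex_Ioi δ).isPreconnected hg hg' h1δ hg0 hxδ

lemma summable_dser {x : ℝ} (hx : 0 < x) :
    Summable (fun n : ℕ => 1 / ((n : ℝ) + 1) - 1 / ((n : ℝ) + x)) := (dser_aux hx).1

lemma hasDerivAt_dser {x : ℝ} (hx : 0 < x) :
    HasDerivAt dser (∑' n : ℕ, 1 / ((n : ℝ) + x) ^ 2) x := (dser_aux hx).2

lemma digamma_eq_deriv_comp : digamma = deriv (Real.log ∘ Real.Gamma) := rfl

lemma diffAt_logGamma {x : ℝ} (hx : 0 < x) :
    DifferentiableAt ℝ (Real.log ∘ Real.Gamma) x := by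
  refine ((Real.differentiableAt_Gamma ?_).log (Real.Gamma_ne_zero ?_)) <;>
    exact fun m => ne_of_gt (by have : (0:ℝ) ≤ m := m.cast_nonneg; linarith)

lemma digamma_rec {x : ℝ} (hx : 0 < x) : digamma (x + 1) = digamma x + 1 / x := by
  rw [digamma_eq_deriv_comp]
  rw [← deriv_comp_add_const, one_div, ← Real.deriv_log,
    ← deriv_add (diffAt_logGamma hx) (Real.differentiableAt_log hx.ne')]
  apply Filter.EventuallyEq.deriv_eq
  filter_upwards [eventually_gt_nhds hx] with y hy
  simp only [Function.comp_apply]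
  rw [Real.Gamma_add_one hy.ne', Real.log_mul hy.ne' (Real.Gamma_pos_of_pos hy).ne', add_comm]
  rfl

lemma digamma_mono {u v : ℝ} (hu : 0 < u) (huv : u ≤ v) : digamma u ≤ digamma v := by
  rw [digamma_eq_deriv_comp]
  exact Real.convexOn_log_Gamma.monotoneOn_deriv
    (fun y hy => diffAt_logGamma hy) (Set.mem_Ioi.mpr hu)
    (Set.mem_Ioi.mpr (lt_of_lt_of_le hu huv)) huv

lemma digamma_add_nat {x : ℝ} (hx : 0 < x) (N : ℕ) :
    digamma (x + N) = digamma x + ∑ m ∈ Finset.range N, 1 / ((m : ℝ) + x) := by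
  induction N with
  | zero => simp
  | succ n ih =>
    have h1 : x + ((n : ℕ) + 1 : ℕ) = (x + n) + 1 := by push_cast; ring
    rw [h1, digamma_rec (by positivity), ih, Finset.sum_range_succ]
    ring

lemma tendsto_one_div_nat_add {y : ℝ} (hy : 0 < y) :
    Tendsto (fun N : ℕ => 1 / ((N : ℝ) + y)) atTop (𝓝 0) := by
  have h : Tendsto (fun N : ℕ => (N : ℝ) + y) atTop atTop :=
    tendsto_atTop_add_const_right _ y tendsto_natCast_atTop_atTop
  simpa [one_div, Pi.inv_def] using h.inv_tendsto_atTop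

lemma telescope_tsum {y : ℝ} (hy : 0 < y) :
    ∑' n : ℕ, (1 / ((n : ℝ) + y) - 1 / ((n : ℝ) + y + 1)) = 1 / y := by
  have hsum : Summable (fun n : ℕ => 1 / ((n : ℝ) + y) - 1 / ((n : ℝ) + y + 1)) := by
    refine (summable_S hy le_rfl).of_nonneg_of_le (fun n => ?_) (fun n => ?_)
    · have hn : (0:ℝ) ≤ n := n.cast_nonneg
      have h1 : (0:ℝ) < (n : ℝ) + y := by linarith
      have := one_div_le_one_div_of_le h1 (by linarith : (n : ℝ) + y ≤ (n : ℝ) + y + 1)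
      linarith
    · have hn : (0:ℝ) ≤ n := n.cast_nonneg
      have h1 : (0:ℝ) < (n : ℝ) + y := by linarith
      have key : 1 / ((n : ℝ) + y) - 1 / ((n : ℝ) + y + 1)
          = 1 / (((n : ℝ) + y) * ((n : ℝ) + y + 1)) := by
        field_simp
        ring
      rw [key]
      refine one_div_le_one_div_of_le (by positivity) ?_
      nlinarith
  have hnn : ∀ n : ℕ, 0 ≤ 1 / ((n : ℝ) + y) - 1 / ((n : ℝ) + y + 1) := by
    intro n
    have hn : (0:ℝ) ≤ n := n.cast_nonneg
    have h1 : (0:ℝ) < (n : ℝ) + y := by linarith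
    have := one_div_le_one_div_of_le h1 (by linarith : (n : ℝ) + y ≤ (n : ℝ) + y + 1)
    linarith
  refine HasSum.tsum_eq ?_
  rw [hasSum_iff_tendsto_nat_of_nonneg hnn]
  have hform : ∀ N : ℕ, ∑ n ∈ Finset.range N, (1 / ((n : ℝ) + y) - 1 / ((n : ℝ) + y + 1))
      = 1 / y - 1 / ((N : ℝ) + y) := by
    intro N
    have h := Finset.sum_range_sub' (fun n : ℕ => 1 / ((n : ℝ) + y)) N
    rw [show ∑ n ∈ Finset.range N, (1 / ((n : ℝ) + y) - 1 / ((n : ℝ) + y + 1))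
        = ∑ n ∈ Finset.range N, (1 / ((n : ℝ) + y) - 1 / (((n + 1 : ℕ) : ℝ) + y)) from
      Finset.sum_congr rfl fun i _ => by push_cast; ring_nf, h]
    norm_num
  simp only [hform]
  simpa using tendsto_const_nhds.sub (tendsto_one_div_nat_add hy)

lemma dser_rec {y : ℝ} (hy : 0 < y) : dser (y + 1) = dser y + 1 / y := by
  have h1 := summable_dser (by linarith : (0:ℝ) < y + 1)
  have h2 := summable_dser hy
  have key : dser (y + 1) - dser y = 1 / y := by
    rw [dser, dser, ← Summable.tsum_sub h1 h2, ← telescope_tsum hy]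
    exact tsum_congr fun n => by ring
  linarith

lemma digamma_eq_Ioc {x : ℝ} (hx : x ∈ Set.Ioc (0:ℝ) 1) : digamma x = digamma 1 + dser x := by
  obtain ⟨hx0, hx1⟩ := hx
  set c := digamma x - digamma 1 with hc
  have hP : Tendsto (fun N : ℕ => ∑ m ∈ Finset.range N, (1 / ((m : ℝ) + 1) - 1 / ((m : ℝ) + x)))
      atTop (𝓝 (dser x)) := (summable_dser hx0).hasSum.tendsto_sum_nat
  have hupper : ∀ N : ℕ,
      c ≤ ∑ m ∈ Finset.range N, (1 / ((m : ℝ) + 1) - 1 / ((m : ℝ) + x)) := by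
    intro N
    have h1 : digamma (x + N) ≤ digamma (1 + N) := digamma_mono (by positivity) (by linarith)
    rw [digamma_add_nat hx0 N, digamma_add_nat one_pos N] at h1
    rw [Finset.sum_sub_distrib]
    linarith
  have hlower : ∀ N : ℕ,
      (∑ m ∈ Finset.range (N + 1), (1 / ((m : ℝ) + 1) - 1 / ((m : ℝ) + x))) - 1 / ((N : ℝ) + 1)
        ≤ c := by
    intro N
    have h1 : digamma (1 + N) ≤ digamma (x + ((N + 1 : ℕ) : ℝ)) :=
      digamma_mono (by positivity) (by push_cast; linarith)
    rw [digamma_add_nat one_pos N, digamma_add_nat hx0 (N + 1)] at h1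
    have h2 : ∑ m ∈ Finset.range (N + 1), 1 / ((m : ℝ) + 1)
        = (∑ m ∈ Finset.range N, 1 / ((m : ℝ) + 1)) + 1 / ((N : ℝ) + 1) :=
      Finset.sum_range_succ _ N
    rw [Finset.sum_sub_distrib, h2]
    linarith
  have hQ : Tendsto (fun N : ℕ =>
      (∑ m ∈ Finset.range (N + 1), (1 / ((m : ℝ) + 1) - 1 / ((m : ℝ) + x))) - 1 / ((N : ℝ) + 1))
      atTop (𝓝 (dser x - 0)) :=
    (hP.comp (tendsto_add_atTop_nat 1)).sub (tendsto_one_div_nat_add one_pos)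
  have hle1 : c ≤ dser x := ge_of_tendsto hP (Eventually.of_forall hupper)
  have hle2 : dser x ≤ c := by
    have := le_of_tendsto hQ (Eventually.of_forall hlower)
    simpa using this
  have : c = dser x := le_antisymm hle1 hle2
  rw [hc] at this; linarith

lemma digamma_eq {x : ℝ} (hx : 0 < x) : digamma x = digamma 1 + dser x := by
  have ext : ∀ n : ℕ, ∀ y ∈ Set.Ioc (0:ℝ) 1, digamma (y + n) = digamma 1 + dser (y + n) := by
    intro n
    induction n with
    | zero => intro y hy; simpa using digamma_eq_Ioc hy
    | succ m ih =>
      intro y hy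
      have hy0 : 0 < y + m := by
        have := hy.1; have : (0:ℝ) ≤ m := m.cast_nonneg; linarith [hy.1]
      have h1 : y + ((m + 1 : ℕ) : ℝ) = (y + m) + 1 := by push_cast; ring
      rw [h1, digamma_rec hy0, ih y hy, dser_rec hy0]
      ring
  have hceil1 : 1 ≤ ⌈x⌉₊ := Nat.one_le_ceil_iff.mpr hx
  set n : ℕ := ⌈x⌉₊ - 1 with hn
  have hcast : (n : ℝ) = (⌈x⌉₊ : ℝ) - 1 := by
    rw [hn, Nat.cast_sub hceil1, Nat.cast_one]
  have hxle : x ≤ (⌈x⌉₊ : ℝ) := Nat.le_ceil x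
  have hlt : (⌈x⌉₊ : ℝ) < x + 1 := Nat.ceil_lt_add_one hx.le
  have hmem : x - n ∈ Set.Ioc (0:ℝ) 1 := by
    constructor
    · rw [hcast]; linarith
    · rw [hcast]; linarith
  have := ext n (x - n) hmem
  rwa [sub_add_cancel] at this

lemma hasDerivAt_S {p : ℕ} (hp : 2 ≤ p) {x : ℝ} (hx : 0 < x) :
    HasDerivAt (S p) (-(p : ℝ) * S (p + 1) x) x := by
  have hδ0 : 0 < x / 2 := by linarith
  have hxδ : x ∈ Set.Ioi (x / 2) := by simp only [Set.mem_Ioi]; linarith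
  have hu : Summable (fun n : ℕ => (p : ℝ) * (1 / ((n : ℝ) + x / 2) ^ (p + 1))) :=
    (summable_S hδ0 (by omega)).mul_left _
  have hg : ∀ (n : ℕ) (y : ℝ), y ∈ Set.Ioi (x / 2) →
      HasDerivAt (fun z => 1 / ((n : ℝ) + z) ^ p) (-(p : ℝ) / ((n : ℝ) + y) ^ (p + 1)) y := by
    intro n y hy
    simp only [Set.mem_Ioi] at hy
    have hn : (0:ℝ) ≤ n := n.cast_nonneg
    exact hasDerivAt_one_div_pow (by omega) (by linarith)
  have hg' : ∀ (n : ℕ) (y : ℝ), y ∈ Set.Ioi (x / 2) →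
      ‖-(p : ℝ) / ((n : ℝ) + y) ^ (p + 1)‖ ≤ (p : ℝ) * (1 / ((n : ℝ) + x / 2) ^ (p + 1)) := by
    intro n y hy
    simp only [Set.mem_Ioi] at hy
    have hn : (0:ℝ) ≤ n := n.cast_nonneg
    have hpos : (0:ℝ) < (n : ℝ) + y := by linarith
    rw [norm_div, norm_neg, Real.norm_natCast, Real.norm_eq_abs,
      abs_of_nonneg (pow_nonneg hpos.le _), mul_one_div]
    refine div_le_div_of_nonneg_left (by positivity) (by positivity) ?_
    exact pow_le_pow_left₀ (by positivity) (by linarith) _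
  have hg0 : Summable (fun n : ℕ => 1 / ((n : ℝ) + x) ^ p) := summable_S hx hp
  have h := hasDerivAt_tsum_of_isPreconnected hu isOpen_Ioi
    (convex_Ioi (x / 2)).isPreconnected hg hg' hxδ hg0 hxδ
  have hval : ∑' n : ℕ, -(p : ℝ) / ((n : ℝ) + x) ^ (p + 1) = -(p : ℝ) * S (p + 1) x := by
    rw [S, ← tsum_mul_left]
    exact tsum_congr fun n => by rw [mul_one_div, neg_div]
  rw [hval] at h
  exact h

lemma polygamma_eq {k : ℕ} (hk : 1 ≤ k) {x : ℝ} (hx : 0 < x) :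
    polygamma k x = (-1 : ℝ) ^ (k + 1) * k.factorial * S (k + 1) x := by
  induction k, hk using Nat.le_induction generalizing x with
  | base =>
    have h1 : polygamma 1 x = deriv digamma x := by
      simp [polygamma]
    rw [h1]
    have heq : digamma =ᶠ[𝓝 x] fun y => digamma 1 + dser y :=
      eventually_of_mem (Ioi_mem_nhds hx) (fun y hy => digamma_eq hy)
    rw [heq.deriv_eq, ((hasDerivAt_dser hx).const_add (digamma 1)).deriv]
    simp only [S, pow_succ, pow_zero, Nat.factorial_one, Nat.cast_one]
    norm_num
  | succ k hk ih =>
    have h1 : polygamma (k + 1) x = deriv (polygamma k) x := by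
      simp only [polygamma, Function.iterate_succ_apply']
    rw [h1]
    have heq : polygamma k =ᶠ[𝓝 x]
        fun y => (-1 : ℝ) ^ (k + 1) * k.factorial * S (k + 1) y :=
      eventually_of_mem (Ioi_mem_nhds hx) (fun y hy => ih hy)
    rw [heq.deriv_eq,
      ((hasDerivAt_S (by omega) hx).const_mul ((-1 : ℝ) ^ (k + 1) * k.factorial)).deriv]
    rw [show (k + 1) + 1 = k + 2 from rfl]
    push_cast [Nat.factorial_succ, pow_succ]
    ring

lemma diff_anti {p : ℕ} (hp : 1 ≤ p) {a u v : ℝ} (ha : 0 < a) (hu : 0 < u) (huv : u ≤ v) :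
    1 / v ^ p - 1 / (v + a) ^ p ≤ 1 / u ^ p - 1 / (u + a) ^ p := by
  have hder : ∀ t : ℝ, 0 < t → HasDerivAt (fun z => 1 / z ^ p - 1 / (z + a) ^ p)
      (-(p : ℝ) / t ^ (p + 1) - -(p : ℝ) / (t + a) ^ (p + 1)) t := by
    intro t ht
    have h1 : HasDerivAt (fun z : ℝ => 1 / (0 + z) ^ p) (-(p : ℝ) / (0 + t) ^ (p + 1)) t :=
      hasDerivAt_one_div_pow hp (by linarith)
    have h2 : HasDerivAt (fun z : ℝ => 1 / (a + z) ^ p) (-(p : ℝ) / (a + t) ^ (p + 1)) t :=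
      hasDerivAt_one_div_pow hp (by linarith)
    have h3 := h1.sub h2
    simp only [zero_add, add_comm a] at h3
    exact h3
  have cont : ContinuousOn (fun z => 1 / z ^ p - 1 / (z + a) ^ p) (Set.Icc u v) :=
    fun t ht => ((hder t (lt_of_lt_of_le hu ht.1)).continuousAt).continuousWithinAt
  have hdiff : DifferentiableOn ℝ (fun z => 1 / z ^ p - 1 / (z + a) ^ p)
      (interior (Set.Icc u v)) := by
    rw [interior_Icc]
    exact fun t ht => ((hder t (lt_of_lt_of_le hu ht.1.le)).differentiableAt).differentiableWithinAt
  have hD : ∀ t ∈ interior (Set.Icc u v), deriv (fun z => 1 / z ^ p - 1 / (z + a) ^ p) t ≤ 0 := by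
    rw [interior_Icc]
    intro t ht
    have ht0 : 0 < t := lt_of_lt_of_le hu ht.1.le
    rw [(hder t ht0).deriv]
    have hle : (p : ℝ) / (t + a) ^ (p + 1) ≤ (p : ℝ) / t ^ (p + 1) := by
      refine div_le_div_of_nonneg_left (by positivity) (by positivity) ?_
      exact pow_le_pow_left₀ ht0.le (by linarith) _
    rw [neg_div, neg_div]
    linarith
  exact antitoneOn_of_deriv_nonpos (convex_Icc u v) cont hdiff hD
    ⟨le_refl u, huv⟩ ⟨huv, le_refl v⟩ huv

end Stmt17

theorem stmt_17 (a : ℝ) (ha : a ∈ Set.Ioo (0:ℝ) 1) (k : ℕ) (hk : Odd k)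
    (x : ℝ) (hx : 1 < x) :
    polygamma k a - polygamma k 1 +
        (Nat.factorial k : ℝ) * (a / x ^ (k + 1) - 1 / a ^ (k + 1) - a) <
      polygamma k (x + a) - polygamma k x ∧
    polygamma k (x + a) - polygamma k x <
      a * (Nat.factorial k : ℝ) / x ^ (k + 1) := by
  open Stmt17 in
  obtain ⟨ha0, ha1⟩ := ha
  have hk1 : 1 ≤ k := hk.pos
  have hx0 : (0:ℝ) < x := by linarith
  have hxa0 : (0:ℝ) < x + a := by linarith
  have h1a0 : (0:ℝ) < 1 + a := by linarith
  have hp2 : 2 ≤ k + 1 := by omega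
  have hsign : ((-1 : ℝ)) ^ (k + 1) = 1 := (hk.add_one).neg_one_pow
  have hfpos : (0:ℝ) < (Nat.factorial k : ℝ) := by positivity
  set p := k + 1 with hp
  have hrw : ∀ t : ℝ, 0 < t → polygamma k t = (Nat.factorial k : ℝ) * S p t := by
    intro t ht
    rw [polygamma_eq hk1 ht, hsign, one_mul]
  rw [hrw a ha0, hrw 1 one_pos, hrw x hx0, hrw (x + a) hxa0]
  have hsum : ∀ t : ℝ, 0 < t → Summable (fun n : ℕ => 1 / ((n : ℝ) + t) ^ p) :=
    fun t ht => summable_S ht hp2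
  -- x^p > 1
  have hxp1 : (1:ℝ) < x ^ p := one_lt_pow₀ hx (by omega)
  have hxppos : (0:ℝ) < x ^ p := by positivity
  have hax : a / x ^ p < a := div_lt_self ha0 hxp1
  -- upper bound : S p (x+a) < S p x
  have hupper : S p (x + a) < S p x := by
    refine Summable.tsum_lt_tsum_of_nonneg (i := 0) (fun n => by positivity) (fun n => ?_) ?_ (hsum x hx0)
    · refine one_div_le_one_div_of_le (by positivity) ?_
      refine pow_le_pow_left₀ (by positivity) (by linarith) _
    · simp only [Nat.cast_zero, zero_add]
      refine one_div_lt_one_div_of_lt (by positivity) ?_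
      refine pow_lt_pow_left₀ (by linarith) hx0.le (by omega)
  -- S p a = 1/a^p + S p (1+a)
  have hpeel : S p a = 1 / a ^ p + S p (1 + a) := by
    rw [S, Summable.tsum_eq_zero_add (hsum a ha0)]
    congr 1
    · norm_num
    · rw [S]
      exact tsum_congr fun n => by push_cast; ring_nf
  -- termwise comparison
  have hterm : ∀ n : ℕ, 1 / ((n : ℝ) + x) ^ p - 1 / ((n : ℝ) + (x + a)) ^ p
      ≤ 1 / ((n : ℝ) + 1) ^ p - 1 / ((n : ℝ) + (1 + a)) ^ p := by
    intro n
    have hn : (0:ℝ) ≤ n := n.cast_nonneg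
    have := diff_anti (by omega : 1 ≤ p) ha0
      (by linarith : (0:ℝ) < (n : ℝ) + 1) (by linarith : (n : ℝ) + 1 ≤ (n : ℝ) + x)
    calc 1 / ((n : ℝ) + x) ^ p - 1 / ((n : ℝ) + (x + a)) ^ p
        = 1 / ((n : ℝ) + x) ^ p - 1 / (((n : ℝ) + x) + a) ^ p := by ring_nf
      _ ≤ 1 / ((n : ℝ) + 1) ^ p - 1 / (((n : ℝ) + 1) + a) ^ p := this
      _ = 1 / ((n : ℝ) + 1) ^ p - 1 / ((n : ℝ) + (1 + a)) ^ p := by ring_nf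
  have hkey : S p x - S p (x + a) ≤ S p 1 - S p (1 + a) := by
    rw [S, S, S, S, ← Summable.tsum_sub (hsum x hx0) (hsum (x + a) hxa0),
      ← Summable.tsum_sub (hsum 1 one_pos) (hsum (1 + a) h1a0)]
    exact Summable.tsum_le_tsum hterm ((hsum x hx0).sub (hsum (x + a) hxa0))
      ((hsum 1 one_pos).sub (hsum (1 + a) h1a0))
  constructor
  · have core : S p a - S p 1 + (a / x ^ p - 1 / a ^ p - a) < S p (x + a) - S p x := by
      rw [hpeel]; linarith
    have := mul_lt_mul_of_pos_left core hfpos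
    ring_nf at this ⊢
    linarith
  · have h2 : (Nat.factorial k : ℝ) * S p (x + a) < (Nat.factorial k : ℝ) * S p x :=
      mul_lt_mul_of_pos_left hupper hfpos
    have h3 : (0:ℝ) < a * (Nat.factorial k : ℝ) / x ^ p := by positivity
    linarith
end

section
/- For every x > 1, one has 1/(2x²) + π²/3 - 9/2 < ψ'(x + 1/2) - ψ'(x) < 1/(2x²). -/
open Real Filter Topology Set

namespace Stmt18

local notation "γ" => Real.eulerMascheroniConstant

lemma summable_base : Summable (fun k : ℕ => 1 / ((k : ℝ) + 1) ^ 2) := by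
  have h := summable_one_div_nat_pow.mpr (le_refl 2)
  have := (summable_nat_add_iff 1).mpr h
  simpa [Nat.cast_add] using this

lemma summable_T {x : ℝ} (hx : 0 < x) : Summable (fun k : ℕ => 1 / (x + k) ^ 2) := by
  set c := min x 1 with hc
  have hc0 : 0 < c := lt_min hx one_pos
  apply Summable.of_nonneg_of_le (fun k => by positivity)
    (fun k => ?_) (summable_base.mul_left (1 / c ^ 2))
  have h1 : c * ((k : ℝ) + 1) ≤ x + k := by
    have h2 : c ≤ x := min_le_left _ _
    have h3 : c ≤ 1 := min_le_right _ _
    have : (0:ℝ) ≤ k := Nat.cast_nonneg k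
    nlinarith
  have hck : 0 < c * ((k:ℝ)+1) := by positivity
  calc 1 / (x + k) ^ 2 ≤ 1 / (c * ((k:ℝ)+1)) ^ 2 := by
        apply one_div_le_one_div_of_le (by positivity) (by nlinarith)
    _ = 1 / c ^2 * (1 / ((k:ℝ)+1)^2) := by rw [mul_pow]; field_simp

lemma summable_g {x : ℝ} (hx : 0 < x) :
    Summable (fun k : ℕ => 1 / ((k:ℝ) + 1) - 1 / (x + k)) := by
  set c := min x 1 with hc
  have hc0 : 0 < c := lt_min hx one_pos
  apply Summable.of_norm_bounded (summable_base.mul_left (|x - 1| / c))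
  intro k
  have hxk : (0:ℝ) < x + k := by positivity
  have hk1 : (0:ℝ) < (k:ℝ) + 1 := by positivity
  have h1 : c * ((k : ℝ) + 1) ≤ x + k := by
    have h2 : c ≤ x := min_le_left _ _
    have h3 : c ≤ 1 := min_le_right _ _
    have : (0:ℝ) ≤ k := Nat.cast_nonneg k
    nlinarith
  have heq : 1 / ((k:ℝ) + 1) - 1 / (x + k) = (x - 1) / (((k:ℝ)+1) * (x + k)) := by
    field_simp; ring
  rw [heq, Real.norm_eq_abs, abs_div, abs_of_pos (mul_pos hk1 hxk)]
  rw [div_le_iff₀ (by positivity)]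
  have : |x - 1| / c * (1 / ((k:ℝ)+1)^2) * (((k:ℝ)+1) * (x+k))
      = |x - 1| * ((x + k) / (c * (((k:ℝ)+1)))) := by
    field_simp
  rw [this]
  have h2 : (1:ℝ) ≤ (x + k) / (c * ((k:ℝ)+1)) := (one_le_div (by positivity)).mpr h1
  nlinarith [abs_nonneg (x-1)]

/-- the digamma function is differentiable at positive reals -/
lemma diff_logGamma {x : ℝ} (hx : 0 < x) :
    DifferentiableAt ℝ (fun y => Real.log (Real.Gamma y)) x := by
  exact (Real.differentiableAt_Gamma (fun m => ((neg_nonpos.mpr (Nat.cast_nonneg m)).trans_lt hx).ne')).log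
    (Real.Gamma_ne_zero (fun m => ((neg_nonpos.mpr (Nat.cast_nonneg m)).trans_lt hx).ne'))

lemma digamma_rec {x : ℝ} (hx : 0 < x) : digamma (x + 1) = digamma x + 1 / x := by
  unfold digamma
  rw [← deriv_comp_add_const, one_div, ← Real.deriv_log,
    ← deriv_add (diff_logGamma hx) (Real.differentiableAt_log hx.ne')]
  apply Filter.EventuallyEq.deriv_eq
  filter_upwards [eventually_gt_nhds hx] with y hy
  simp only [Real.Gamma_add_one hy.ne', Real.log_mul hy.ne'
    (Real.Gamma_pos_of_pos hy).ne', add_comm]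
  rfl

lemma digamma_one : digamma 1 = -γ := by
  unfold digamma
  rw [deriv.log (Real.differentiableAt_Gamma (fun m => ((neg_nonpos.mpr (Nat.cast_nonneg m)).trans_lt one_pos).ne')) (by rw [Real.Gamma_one]; norm_num)]
  rw [Real.Gamma_one, div_one, Real.eulerMascheroniConstant_eq_neg_deriv, neg_neg]

lemma digamma_mono : MonotoneOn digamma (Set.Ioi (0:ℝ)) := by
  have h := Real.convexOn_log_Gamma.monotoneOn_deriv
    (fun y hy => by simpa [Function.comp_def] using diff_logGamma (mem_Ioi.mp hy))
  simpa [digamma, Function.comp_def] using h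

lemma digamma_add_nat {x : ℝ} (hx : 0 < x) (n : ℕ) :
    digamma (x + n) = digamma x + ∑ k ∈ Finset.range n, 1 / (x + k) := by
  induction n with
  | zero => simp
  | succ n ih =>
    have h : x + ((n:ℕ)+1 : ℕ) = (x + n) + 1 := by push_cast; ring
    rw [h, digamma_rec (by positivity), ih, Finset.sum_range_succ]; ring

lemma digamma_eq {x : ℝ} (hx : 0 < x) :
    digamma x = -γ + ∑' k : ℕ, (1 / ((k:ℝ) + 1) - 1 / (x + k)) := by
  set A := ∑' k : ℕ, (1 / ((k:ℝ) + 1) - 1 / (x + k)) with hA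
  set m := ⌈x⌉₊ with hm
  have hxm : x ≤ m := Nat.le_ceil x
  set S : ℕ → ℝ := fun n => ∑ k ∈ Finset.range n, 1 / (x + (k:ℝ)) with hS
  set H : ℕ → ℝ := fun n => ∑ k ∈ Finset.range n, 1 / ((k:ℝ) + 1) with hH
  have hH1 : ∀ n : ℕ, digamma (1 + n) = digamma 1 + H n := by
    intro n
    rw [digamma_add_nat one_pos n]
    congr 1
    exact Finset.sum_congr rfl (fun k _ => by rw [add_comm])
  have hSx : ∀ n : ℕ, digamma (x + n) = digamma x + S n := fun n => digamma_add_nat hx n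
  have key1 : ∀ n : ℕ, digamma 1 + (H n - S (n+1)) ≤ digamma x := by
    intro n
    have hle : (1:ℝ) + n ≤ x + ((n:ℕ)+1:ℕ) := by push_cast; linarith
    have h := digamma_mono (mem_Ioi.mpr (by positivity)) (mem_Ioi.mpr (by positivity)) hle
    rw [hH1 n, hSx (n+1)] at h
    push_cast at h ⊢
    linarith
  have key2 : ∀ n : ℕ, digamma x ≤ digamma 1 + (H (n+m) - S (n+1)) := by
    intro n
    have hle : x + ((n:ℕ)+1:ℕ) ≤ (1:ℝ) + (n+m : ℕ) := by push_cast; linarith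
    have h := digamma_mono (mem_Ioi.mpr (by positivity)) (mem_Ioi.mpr (by positivity)) hle
    rw [hH1 (n+m), hSx (n+1)] at h
    push_cast at h ⊢
    linarith
  have hinvx : Tendsto (fun n : ℕ => 1 / (x + (n:ℝ))) atTop (𝓝 0) := by
    simp only [one_div]
    exact Tendsto.comp tendsto_inv_atTop_zero
      (tendsto_atTop_add_const_left _ x tendsto_natCast_atTop_atTop)
  have htend1 : Tendsto (fun n => H n - S (n+1)) atTop (𝓝 A) := by
    have h1 : Tendsto (fun n => ∑ k ∈ Finset.range n, (1/((k:ℝ)+1) - 1/(x+k))) atTop (𝓝 A) :=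
      (summable_g hx).hasSum.tendsto_sum_nat
    have heq : (fun n => H n - S (n+1))
        = fun n => (∑ k ∈ Finset.range n, (1/((k:ℝ)+1) - 1/(x+k))) - 1/(x+n) := by
      funext n
      rw [Finset.sum_sub_distrib]
      simp only [hS, hH, Finset.sum_range_succ]
      ring
    rw [heq]
    simpa using h1.sub hinvx
  have htail : Tendsto (fun n => H (n+m) - H n) atTop (𝓝 0) := by
    have hb : ∀ n : ℕ, H (n+m) - H n ≤ (m:ℝ) * (1/((n:ℝ)+1)) := by
      intro n
      have hsplit : H (n+m) - H n = ∑ k ∈ Finset.range m, 1/(((n:ℝ)+(k:ℝ))+1) := by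
        simp only [hH, Finset.sum_range_add]
        push_cast
        ring
      rw [hsplit]
      calc ∑ k ∈ Finset.range m, 1/(((n:ℝ)+(k:ℝ))+1)
          ≤ ∑ _k ∈ Finset.range m, 1/((n:ℝ)+1) := Finset.sum_le_sum (fun k _ => by
            apply one_div_le_one_div_of_le (by positivity)
            have : (0:ℝ) ≤ (k:ℝ) := Nat.cast_nonneg k
            linarith)
        _ = (m:ℝ) * (1/((n:ℝ)+1)) := by
            rw [Finset.sum_const, Finset.card_range, nsmul_eq_mul]
    have hb0 : ∀ n : ℕ, 0 ≤ H (n+m) - H n := by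
      intro n
      have : H n ≤ H (n+m) := by
        apply Finset.sum_le_sum_of_subset_of_nonneg
          (Finset.range_subset_range.mpr (Nat.le_add_right n m))
        intro k _ _
        positivity
      linarith
    apply squeeze_zero hb0 hb
    have h0 : Tendsto (fun n : ℕ => 1/((n:ℝ)+1)) atTop (𝓝 0) :=
      tendsto_one_div_add_atTop_nhds_zero_nat
    simpa using h0.const_mul (m:ℝ)
  have htend2 : Tendsto (fun n => H (n+m) - S (n+1)) atTop (𝓝 A) := by
    have heq : (fun n => H (n+m) - S (n+1)) = fun n => (H n - S (n+1)) + (H (n+m) - H n) := by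
      funext n; ring
    rw [heq]
    simpa using htend1.add htail
  have h1 : digamma 1 + A ≤ digamma x :=
    le_of_tendsto (by simpa using (tendsto_const_nhds (x := digamma 1)).add htend1)
      (Filter.Eventually.of_forall key1)
  have h2 : digamma x ≤ digamma 1 + A :=
    ge_of_tendsto (by simpa using (tendsto_const_nhds (x := digamma 1)).add htend2)
      (Filter.Eventually.of_forall key2)
  rw [← digamma_one]
  linarith


lemma hasDerivAt_psi_sum {x : ℝ} (hx : 0 < x) :
    HasDerivAt (fun y => ∑' k : ℕ, (1 / ((k:ℝ) + 1) - 1 / (y + k)))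
      (∑' k : ℕ, 1 / (x + k) ^ 2) x := by
  have hx2 : 0 < x / 2 := by linarith
  apply hasDerivAt_tsum_of_isPreconnected (summable_T hx2) isOpen_Ioi
      (convex_Ioi (x/2)).isPreconnected
      (g := fun (k : ℕ) (y : ℝ) => 1 / ((k:ℝ) + 1) - 1 / (y + k))
      (g' := fun (k : ℕ) (y : ℝ) => 1 / (y + k) ^ 2)
      ?_ ?_ (mem_Ioi.mpr (by linarith)) (summable_g hx) (mem_Ioi.mpr (by linarith))
  · intro k y hy
    have hy0 : 0 < y := lt_trans hx2 (mem_Ioi.mp hy)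
    have hyk : (0:ℝ) < y + k := by positivity
    have hd : HasDerivAt (fun y : ℝ => y + (k:ℝ)) 1 y := (hasDerivAt_id y).add_const _
    have h2 := (hd.inv hyk.ne').const_sub (1 / ((k:ℝ) + 1))
    have h3 : -(-1 / (y + (k:ℝ)) ^ 2) = 1 / (y + (k:ℝ)) ^ 2 := by ring
    rw [h3] at h2
    simpa only [one_div, Pi.inv_apply] using h2
  · intro k y hy
    have hy' : x / 2 < y := mem_Ioi.mp hy
    have hyk : (0:ℝ) < x / 2 + k := by positivity
    rw [Real.norm_eq_abs, abs_of_nonneg (by positivity)]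
    apply one_div_le_one_div_of_le (by positivity)
    have : x / 2 + (k:ℝ) ≤ y + k := by linarith
    exact pow_le_pow_left₀ (le_of_lt hyk) this 2

lemma deriv_digamma_eq {x : ℝ} (hx : 0 < x) :
    deriv digamma x = ∑' k : ℕ, 1 / (x + k) ^ 2 := by
  have heq : digamma =ᶠ[𝓝 x] (fun y => -γ + ∑' k : ℕ, (1 / ((k:ℝ) + 1) - 1 / (y + k))) := by
    filter_upwards [eventually_gt_nhds hx] with y hy using digamma_eq hy
  rw [heq.deriv_eq]
  exact ((hasDerivAt_psi_sum hx).const_add (-γ)).deriv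

lemma hasSum_T_one : HasSum (fun k : ℕ => 1 / ((1:ℝ) + k) ^ 2) (π^2/6) := by
  have h := (hasSum_nat_add_iff' 1).2 hasSum_zeta_two
  simp only [Finset.range_one, Finset.sum_singleton, Nat.cast_zero] at h
  norm_num at h
  convert h using 2 with k
  · rfl
  push_cast
  ring

lemma hasSum_odd : HasSum (fun k : ℕ => 1 / (((2*k+1 : ℕ)):ℝ) ^ 2) (π^2/8) := by
  have heven : HasSum (fun k : ℕ => 1 / (((2*k : ℕ)):ℝ) ^ 2) (π^2/24) := by
    have h := hasSum_zeta_two.mul_left (1/4 : ℝ)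
    have e : (fun k : ℕ => (1/4 : ℝ) * (1 / (k:ℝ)^2)) = fun k : ℕ => 1 / (((2*k : ℕ)):ℝ) ^ 2 := by
      funext k
      push_cast
      rw [mul_pow]
      ring
    rw [e] at h
    convert h using 1
    · rfl
    ring
  have hcomp := Summable.comp_injective (f := fun n : ℕ => 1 / (n:ℝ)^2)
    (i := fun k : ℕ => 2*k+1) hasSum_zeta_two.summable (fun a b hab => by simpa using hab)
  have hodd : Summable (fun k : ℕ => 1 / (((2*k+1 : ℕ)):ℝ) ^ 2) := by
    simpa [Function.comp_def] using hcomp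
  have htot := HasSum.even_add_odd (f := fun n : ℕ => 1 / (n:ℝ)^2) heven hodd.hasSum
  have := htot.unique hasSum_zeta_two
  have hval : (∑' k : ℕ, 1 / (((2*k+1 : ℕ)):ℝ) ^ 2) = π^2/8 := by linarith
  rw [← hval]
  exact hodd.hasSum

lemma hasSum_T_threehalf : HasSum (fun k : ℕ => 1 / ((3/2:ℝ) + k) ^ 2) (π^2/2 - 4) := by
  have h := (hasSum_nat_add_iff' 1).2 hasSum_odd
  simp only [Finset.range_one, Finset.sum_singleton] at h
  norm_num at h
  have h4 := h.mul_left 4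
  convert h4 using 1
  · rfl
  · funext k
    have h1 : ((2:ℝ)*((k:ℝ)+1)+1) > 0 := by positivity
    have h2 : ((3:ℝ)/2 + (k:ℝ)) > 0 := by positivity
    field_simp
    ring
  · ring

lemma mono_aux {a b : ℝ} (hb : 0 < b) (hba : b ≤ a) :
    1/a^2 - 1/(a+1/2)^2 ≤ 1/b^2 - 1/(b+1/2)^2 := by
  have ha : 0 < a := lt_of_lt_of_le hb hba
  have ha2 : (0:ℝ) < a + 1/2 := by linarith
  have hb2 : (0:ℝ) < b + 1/2 := by linarith
  have ea : 1/a^2 - 1/(a+1/2)^2 = (1/a - 1/(a+1/2)) * (1/a + 1/(a+1/2)) := by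
    field_simp; ring
  have eb : 1/b^2 - 1/(b+1/2)^2 = (1/b - 1/(b+1/2)) * (1/b + 1/(b+1/2)) := by
    field_simp; ring
  have ea2 : 1/a - 1/(a+1/2) = (1/2) / (a*(a+1/2)) := by field_simp; ring
  have eb2 : 1/b - 1/(b+1/2) = (1/2) / (b*(b+1/2)) := by field_simp; ring
  rw [ea, eb, ea2, eb2]
  have hY : (0:ℝ) < b*(b+1/2) := by positivity
  have hXY : b*(b+1/2) ≤ a*(a+1/2) := by nlinarith
  have h1 : (1/2:ℝ) / (a*(a+1/2)) ≤ (1/2) / (b*(b+1/2)) := by gcongr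
  apply mul_le_mul h1 ?_ (by positivity) (by positivity)
  exact add_le_add (one_div_le_one_div_of_le hb hba) (one_div_le_one_div_of_le hb2 (by linarith))

end Stmt18

theorem stmt_18 (x : ℝ) (hx : 1 < x) :
    1 / (2 * x ^ 2) + Real.pi ^ 2 / 3 - 9/2 < deriv digamma (x + 1/2) - deriv digamma x ∧
    deriv digamma (x + 1/2) - deriv digamma x < 1 / (2 * x ^ 2) := by
  have hx0 : (0:ℝ) < x := by linarith
  have hxh : (0:ℝ) < x + 1/2 := by linarith
  rw [Stmt18.deriv_digamma_eq hxh, Stmt18.deriv_digamma_eq hx0]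
  have hS1 : Summable (fun k : ℕ => 1/(x+(k:ℝ))^2) := Stmt18.summable_T hx0
  have hS2 : Summable (fun k : ℕ => 1/((x+1/2)+(k:ℝ))^2) := Stmt18.summable_T hxh
  have hT1 : Summable (fun k : ℕ => 1/((1:ℝ)+(k:ℝ))^2) := Stmt18.summable_T one_pos
  have hT2 : Summable (fun k : ℕ => 1/((3/2:ℝ)+(k:ℝ))^2) := Stmt18.summable_T (by norm_num)
  have hdiff : (∑' k:ℕ, 1/(x+(k:ℝ))^2) - (∑' k:ℕ, 1/((x+1/2)+(k:ℝ))^2)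
      = ∑' k:ℕ, (1/(x+(k:ℝ))^2 - 1/((x+1/2)+(k:ℝ))^2) := (Summable.tsum_sub hS1 hS2).symm
  have hdiff1 : (π^2/6) - (π^2/2-4) = ∑' k:ℕ, (1/((1:ℝ)+(k:ℝ))^2 - 1/((3/2:ℝ)+(k:ℝ))^2) := by
    rw [← Stmt18.hasSum_T_one.tsum_eq, ← Stmt18.hasSum_T_threehalf.tsum_eq]
    exact (Summable.tsum_sub hT1 hT2).symm
  have hle : ∑' k:ℕ, (1/(x+(k:ℝ))^2 - 1/((x+1/2)+(k:ℝ))^2)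
      ≤ ∑' k:ℕ, (1/((1:ℝ)+(k:ℝ))^2 - 1/((3/2:ℝ)+(k:ℝ))^2) := by
    apply Summable.tsum_le_tsum ?_ (hS1.sub hS2) (hT1.sub hT2)
    intro k
    have hk : (0:ℝ) ≤ (k:ℝ) := Nat.cast_nonneg k
    have h := Stmt18.mono_aux (a := x + (k:ℝ)) (b := 1 + (k:ℝ)) (by linarith) (by linarith)
    have e1 : (x + (k:ℝ)) + 1/2 = (x + 1/2) + (k:ℝ) := by ring
    have e2 : ((1:ℝ) + (k:ℝ)) + 1/2 = 3/2 + (k:ℝ) := by ring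
    rw [e1, e2] at h
    exact h
  have hupper : (∑' k:ℕ, 1/((x+1/2)+(k:ℝ))^2) ≤ ∑' k:ℕ, 1/(x+(k:ℝ))^2 := by
    apply Summable.tsum_le_tsum ?_ hS2 hS1
    intro k
    have hk : (0:ℝ) ≤ (k:ℝ) := Nat.cast_nonneg k
    apply one_div_le_one_div_of_le (by positivity)
    have h : x + (k:ℝ) ≤ (x+1/2) + (k:ℝ) := by linarith
    exact pow_le_pow_left₀ (by positivity) h 2
  constructor
  · have hx2 : 1/(2*x^2) < 1/2 := by
      apply one_div_lt_one_div_of_lt (by norm_num)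
      nlinarith
    have h := hle
    rw [← hdiff, ← hdiff1] at h
    linarith
  · have hpos : (0:ℝ) < 1/(2*x^2) := by positivity
    linarith
end

section
/- For every x > 1, one has 3/x⁴ + 14π⁴/15 - 99 < ψ'''(x + 1/2) - ψ'''(x) < 3/x⁴. -/
set_option maxHeartbeats 1000000

open Real Filter Finset Set Topology

namespace S19

lemma hasDerivAt_one_div_pow (a : ℝ) {x : ℝ} (hx : 0 < x + a) (k : ℕ) :
    HasDerivAt (fun y : ℝ => 1 / (y + a) ^ (k + 1))
      (-(k + 1 : ℝ) / (x + a) ^ (k + 2)) x := by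
  have h := (((hasDerivAt_id x).add_const a).fun_pow (k + 1)).fun_inv (pow_ne_zero _ hx.ne')
  simp only [one_div, id_eq, Nat.add_sub_cancel, mul_one] at h ⊢
  convert h using 1
  · rfl
  · rfl
  rw [div_eq_div_iff (by positivity) (by positivity)]
  push_cast
  ring

lemma summable_one_div_shift {x : ℝ} (hx : 0 < x) (k : ℕ) :
    Summable (fun m : ℕ => 1 / (x + m) ^ (k + 2)) := by
  rw [← summable_nat_add_iff 1]
  have base : Summable (fun m : ℕ => 1 / ((m : ℝ) + 1) ^ 2) := by
    have := (Real.summable_one_div_nat_pow (p := 2)).mpr one_lt_two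
    rw [← summable_nat_add_iff 1] at this
    refine this.congr fun m => by push_cast; ring
  refine Summable.of_nonneg_of_le (fun m => by positivity) (fun m => ?_) base
  have h1 : (1:ℝ) ≤ (m:ℝ) + 1 := by linarith [Nat.cast_nonneg (α := ℝ) m]
  have h2 : ((m:ℝ) + 1) ≤ x + ((m + 1 : ℕ) : ℝ) := by push_cast; linarith
  have h3 : ((m:ℝ) + 1) ^ 2 ≤ (x + ((m + 1 : ℕ) : ℝ)) ^ (k + 2) :=
    calc ((m:ℝ) + 1) ^ 2 ≤ ((m:ℝ) + 1) ^ (k + 2) := pow_le_pow_right₀ h1 (by omega)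
      _ ≤ (x + ((m + 1 : ℕ) : ℝ)) ^ (k + 2) := pow_le_pow_left₀ (by positivity) h2 _
  exact one_div_le_one_div_of_le (by positivity) h3

-- generic helpers about uniform convergence
lemma tuon_shift {F : ℕ → ℝ → ℝ} {f : ℝ → ℝ} {s : Set ℝ}
    (h : TendstoUniformlyOn F f atTop s) :
    TendstoUniformlyOn (fun n => F (n + 1)) f atTop s :=
  fun u hu => (tendsto_add_atTop_nat 1).eventually (h u hu)

lemma tuon_const_seq {c : ℕ → ℝ} {L : ℝ} (h : Tendsto c atTop (𝓝 L)) (s : Set ℝ) :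
    TendstoUniformlyOn (fun n (_ : ℝ) => c n) (fun _ => L) atTop s := by
  rw [Metric.tendstoUniformlyOn_iff]
  intro ε hε
  have h2 : ∀ᶠ n in atTop, dist (c n) L < ε := (Metric.tendsto_nhds.mp h) ε hε
  filter_upwards [h2] with n hn x _
  rw [dist_comm]; exact hn

lemma tuon_fixed (f : ℝ → ℝ) (s : Set ℝ) :
    TendstoUniformlyOn (fun (_ : ℕ) => f) f atTop s := by
  intro u hu
  filter_upwards with n x _
  exact refl_mem_uniformity hu

noncomputable def g (m : ℕ) (x : ℝ) : ℝ := 1 / ((m:ℝ) + 1) - 1 / (x + ((m:ℝ) + 1))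

noncomputable def psi (x : ℝ) : ℝ :=
  (-eulerMascheroniConstant + -(1 / x)) + ∑' m : ℕ, g m x

lemma tlu_series (c : ℝ) (k : ℕ) :
    TendstoLocallyUniformlyOn
      (fun (n : ℕ) (x : ℝ) => ∑ m ∈ range (n + 1), c / (x + m) ^ (k + 2))
      (fun x => ∑' m : ℕ, c / (x + m) ^ (k + 2)) atTop (Ioi 0) := by
  rw [tendstoLocallyUniformlyOn_iff_forall_isCompact isOpen_Ioi]
  intro K hK hKc
  rcases K.eq_empty_or_nonempty with rfl | hne
  · intro u hu; simp
  obtain ⟨a, haK, ha⟩ := hKc.exists_isMinOn hne continuousOn_id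
  have ha0 : 0 < a := hK haK
  have hbound : ∀ (m : ℕ), ∀ y ∈ K, ‖c / (y + m) ^ (k + 2)‖ ≤ |c| / (a + m) ^ (k + 2) := by
    intro m y hy
    have hya : a ≤ y := ha hy
    have hy0 : 0 < y := hK hy
    have hym : (0:ℝ) < y + m := by have := Nat.cast_nonneg (α := ℝ) m; linarith
    have ham : (0:ℝ) < a + m := by have := Nat.cast_nonneg (α := ℝ) m; linarith
    rw [norm_div, norm_pow, Real.norm_eq_abs, Real.norm_eq_abs, abs_of_pos hym]
    gcongr
  have hu : Summable (fun m : ℕ => |c| / (a + m) ^ (k + 2)) := by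
    have := (summable_one_div_shift ha0 k).mul_left |c|
    refine this.congr fun m => by rw [mul_one_div]
  exact tuon_shift (tendstoUniformlyOn_tsum_nat hu hbound)

lemma tendsto_log_sub_harmonic :
    Tendsto (fun n : ℕ => Real.log n - ((harmonic n : ℚ) : ℝ)) atTop
      (𝓝 (-eulerMascheroniConstant)) := by
  have h := (Real.tendsto_eulerMascheroniSeq').neg
  refine h.congr' ?_
  filter_upwards [eventually_ge_atTop 1] with n hn
  rw [Real.eulerMascheroniSeq', if_neg (by omega)]
  ring

lemma tlu_F1 :
    TendstoLocallyUniformlyOn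
      (fun (n : ℕ) (x : ℝ) => Real.log n - ∑ m ∈ range (n + 1), 1 / (x + (m:ℝ)))
      psi atTop (Ioi 0) := by
  rw [tendstoLocallyUniformlyOn_iff_forall_isCompact isOpen_Ioi]
  intro K hK hKc
  rcases K.eq_empty_or_nonempty with rfl | hne
  · intro u hu; simp
  obtain ⟨b, hbK, hb⟩ := hKc.exists_isMaxOn hne continuousOn_id
  have hb0 : 0 < b := hK hbK
  have hbound : ∀ (m : ℕ), ∀ y ∈ K, ‖g m y‖ ≤ b / ((m:ℝ) + 1) ^ 2 := by
    intro m y hy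
    have hyb : y ≤ b := hb hy
    have hy0 : 0 < y := hK hy
    have e : g m y = y / (((m:ℝ) + 1) * (y + ((m:ℝ) + 1))) := by
      rw [g, div_sub_div _ _ (by positivity) (by positivity)]
      congr 1
      ring
    rw [Real.norm_eq_abs, e, abs_of_nonneg (by positivity)]
    apply div_le_div₀ (le_of_lt hb0) hyb (by positivity)
    nlinarith [Nat.cast_nonneg (α := ℝ) m]
  have hu : Summable (fun m : ℕ => b / ((m:ℝ) + 1) ^ 2) := by
    have h2 := (summable_one_div_shift (one_pos) 0).mul_left b
    refine h2.congr fun m => by rw [mul_one_div]; congr 2; ring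
  have h_tsum : TendstoUniformlyOn (fun (n : ℕ) (x : ℝ) => ∑ m ∈ range n, g m x)
      (fun x => ∑' m : ℕ, g m x) atTop K := tendstoUniformlyOn_tsum_nat hu hbound
  have h_comb := ((tuon_const_seq tendsto_log_sub_harmonic K).add
      (tuon_fixed (fun x => -(1/x)) K)).add h_tsum
  refine (h_comb.congr ?_).congr_right ?_
  · filter_upwards with n
    intro x _
    have hsum : ∑ m ∈ range (n + 1), 1 / (x + (m:ℝ))
        = 1 / (x + ((0:ℕ):ℝ)) + ∑ m ∈ range n, 1 / (x + ((m:ℕ) + 1 : ℝ)) := by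
      rw [Finset.sum_range_succ']
      rw [add_comm]
      congr 1
      refine Finset.sum_congr rfl fun m _ => by push_cast; ring_nf
    have hH : ((harmonic n : ℚ) : ℝ) = ∑ m ∈ range n, 1 / ((m:ℝ) + 1) := by
      rw [harmonic]
      push_cast
      simp [one_div]
    simp only [Pi.add_apply]
    rw [hsum, hH]
    push_cast
    simp only [g, Finset.sum_sub_distrib]
    ring
  · intro x _
    simp only [Pi.add_apply, psi]

noncomputable def T2 (x : ℝ) : ℝ := ∑' m : ℕ, 1 / (x + (m:ℝ)) ^ 2
noncomputable def T3 (x : ℝ) : ℝ := ∑' m : ℕ, (-2) / (x + (m:ℝ)) ^ 3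
noncomputable def T4 (x : ℝ) : ℝ := ∑' m : ℕ, 6 / (x + (m:ℝ)) ^ 4

-- shapes for the three series levels
lemma tlu_T2 :
    TendstoLocallyUniformlyOn
      (fun (n : ℕ) (x : ℝ) => ∑ m ∈ range (n + 1), 1 / (x + (m:ℝ)) ^ 2)
      T2 atTop (Ioi 0) := by
  exact tlu_series 1 0

lemma tlu_T3 :
    TendstoLocallyUniformlyOn
      (fun (n : ℕ) (x : ℝ) => ∑ m ∈ range (n + 1), (-2) / (x + (m:ℝ)) ^ 3)
      T3 atTop (Ioi 0) := by
  exact tlu_series (-2) 1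

lemma tlu_T4 :
    TendstoLocallyUniformlyOn
      (fun (n : ℕ) (x : ℝ) => ∑ m ∈ range (n + 1), 6 / (x + (m:ℝ)) ^ 4)
      T4 atTop (Ioi 0) := by
  exact tlu_series 6 2

lemma cast_pos (m : ℕ) {x : ℝ} (hx : 0 < x) : (0:ℝ) < x + m := by
  have := Nat.cast_nonneg (α := ℝ) m; linarith

lemma hasDerivAt_logGammaSeq (n : ℕ) {x : ℝ} (hx : 0 < x) :
    HasDerivAt (fun y => BohrMollerup.logGammaSeq y n)
      (Real.log n - ∑ m ∈ range (n + 1), 1 / (x + (m:ℝ))) x := by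
  have hA : HasDerivAt (fun y : ℝ => y * Real.log n + Real.log (Nat.factorial n)) (Real.log n) x :=
    (hasDerivAt_mul_const _).add_const _
  have hB : HasDerivAt (fun y : ℝ => ∑ m ∈ range (n + 1), Real.log (y + m))
      (∑ m ∈ range (n + 1), 1 / (x + (m:ℝ))) x := by
    refine HasDerivAt.fun_sum fun m _ => ?_
    have hm := cast_pos m hx
    have := ((hasDerivAt_id x).add_const (m:ℝ)).log hm.ne'
    simpa [one_div] using this
  exact hA.sub hB

lemma hasDerivAt_F1 (n : ℕ) {x : ℝ} (hx : 0 < x) :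
    HasDerivAt (fun y : ℝ => Real.log n - ∑ m ∈ range (n + 1), 1 / (y + (m:ℝ)))
      (∑ m ∈ range (n + 1), 1 / (x + (m:ℝ)) ^ 2) x := by
  have hB : HasDerivAt (fun y : ℝ => ∑ m ∈ range (n + 1), 1 / (y + (m:ℝ)))
      (∑ m ∈ range (n + 1), -(1:ℝ) / (x + (m:ℝ)) ^ 2) x := by
    refine HasDerivAt.fun_sum fun m _ => ?_
    have h := hasDerivAt_one_div_pow (m:ℝ) (cast_pos m hx) 0
    refine (h.congr_of_eventuallyEq ?_).congr_deriv ?_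
    · filter_upwards with y; norm_num
    · norm_num
  have := hB.const_sub (Real.log n)
  convert this using 1
  · rfl
  · rfl
  rw [← Finset.sum_neg_distrib]
  exact Finset.sum_congr rfl fun m _ => by ring

lemma hasDerivAt_F2 (n : ℕ) {x : ℝ} (hx : 0 < x) :
    HasDerivAt (fun y : ℝ => ∑ m ∈ range (n + 1), 1 / (y + (m:ℝ)) ^ 2)
      (∑ m ∈ range (n + 1), (-2) / (x + (m:ℝ)) ^ 3) x := by
  refine HasDerivAt.fun_sum fun m _ => ?_
  have h := hasDerivAt_one_div_pow (m:ℝ) (cast_pos m hx) 1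
  refine (h.congr_of_eventuallyEq ?_).congr_deriv ?_
  · filter_upwards with y; norm_num
  · norm_num

lemma hasDerivAt_F3 (n : ℕ) {x : ℝ} (hx : 0 < x) :
    HasDerivAt (fun y : ℝ => ∑ m ∈ range (n + 1), (-2) / (y + (m:ℝ)) ^ 3)
      (∑ m ∈ range (n + 1), 6 / (x + (m:ℝ)) ^ 4) x := by
  refine HasDerivAt.fun_sum fun m _ => ?_
  have h := (hasDerivAt_one_div_pow (m:ℝ) (cast_pos m hx) 2).const_mul (-2 : ℝ)
  refine (h.congr_of_eventuallyEq ?_).congr_deriv ?_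
  · filter_upwards with y; push_cast; ring
  · push_cast; ring

lemma hasDerivAt_logGamma {x : ℝ} (hx : x ∈ Ioi (0:ℝ)) :
    HasDerivAt (fun y => Real.log (Real.Gamma y)) (psi x) x :=
  hasDerivAt_of_tendstoLocallyUniformlyOn isOpen_Ioi tlu_F1
    (Eventually.of_forall fun n y hy => hasDerivAt_logGammaSeq n hy)
    (fun y hy => Real.BohrMollerup.tendsto_log_gamma hy) hx

lemma hasDerivAt_psi {x : ℝ} (hx : x ∈ Ioi (0:ℝ)) : HasDerivAt psi (T2 x) x :=
  hasDerivAt_of_tendstoLocallyUniformlyOn isOpen_Ioi tlu_T2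
    (Eventually.of_forall fun n y hy => hasDerivAt_F1 n hy)
    (fun y hy => tlu_F1.tendsto_at hy) hx

lemma hasDerivAt_T2 {x : ℝ} (hx : x ∈ Ioi (0:ℝ)) : HasDerivAt T2 (T3 x) x :=
  hasDerivAt_of_tendstoLocallyUniformlyOn isOpen_Ioi tlu_T3
    (Eventually.of_forall fun n y hy => hasDerivAt_F2 n hy)
    (fun y hy => tlu_T2.tendsto_at hy) hx

lemma hasDerivAt_T3 {x : ℝ} (hx : x ∈ Ioi (0:ℝ)) : HasDerivAt T3 (T4 x) x :=
  hasDerivAt_of_tendstoLocallyUniformlyOn isOpen_Ioi tlu_T4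
    (Eventually.of_forall fun n y hy => hasDerivAt_F3 n hy)
    (fun y hy => tlu_T3.tendsto_at hy) hx

lemma deriv3_digamma {x : ℝ} (hx : 0 < x) : deriv^[3] digamma x = T4 x := by
  have e1 : ∀ y ∈ Ioi (0:ℝ), digamma y = psi y := fun y hy =>
    (hasDerivAt_logGamma hy).deriv
  have e2 : ∀ y ∈ Ioi (0:ℝ), deriv digamma y = T2 y := by
    intro y hy
    have hev : digamma =ᶠ[𝓝 y] psi :=
      Filter.eventuallyEq_of_mem (isOpen_Ioi.mem_nhds hy) e1
    rw [hev.deriv_eq, (hasDerivAt_psi hy).deriv]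
  have e3 : ∀ y ∈ Ioi (0:ℝ), deriv (deriv digamma) y = T3 y := by
    intro y hy
    have hev : deriv digamma =ᶠ[𝓝 y] T2 :=
      Filter.eventuallyEq_of_mem (isOpen_Ioi.mem_nhds hy) e2
    rw [hev.deriv_eq, (hasDerivAt_T2 hy).deriv]
  have e4 : ∀ y ∈ Ioi (0:ℝ), deriv (deriv (deriv digamma)) y = T4 y := by
    intro y hy
    have hev : deriv (deriv digamma) =ᶠ[𝓝 y] T3 :=
      Filter.eventuallyEq_of_mem (isOpen_Ioi.mem_nhds hy) e3
    rw [hev.deriv_eq, (hasDerivAt_T3 hy).deriv]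
  have : deriv^[3] digamma = deriv (deriv (deriv digamma)) := by
    simp [Function.iterate_succ, Function.comp_def]
  rw [this]
  exact e4 x hx

lemma summable_T4 {x : ℝ} (hx : 0 < x) : Summable (fun m : ℕ => 6 / (x + (m:ℝ)) ^ 4) := by
  have h := (summable_one_div_shift hx 2).mul_left 6
  exact h.congr fun m => by rw [mul_one_div]

noncomputable def Hf (s : ℝ) : ℝ := 1 / s ^ 4 - 1 / (s + 1/2) ^ 4

lemma Hf_anti : StrictAntiOn Hf (Ioi 0) := by
  apply strictAntiOn_of_deriv_neg (convex_Ioi 0)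
  · apply ContinuousOn.sub
    · exact continuousOn_const.div (by fun_prop) fun s hs => pow_ne_zero _ (ne_of_gt hs)
    · refine continuousOn_const.div (by fun_prop) fun s hs => pow_ne_zero _ ?_
      have : (0:ℝ) < s := hs
      positivity
  · rw [interior_Ioi]
    intro s hs
    have hs0 : (0:ℝ) < s := hs
    have h1 : HasDerivAt (fun y : ℝ => 1 / y ^ 4) (-4 / s ^ 5) s := by
      have hp := (hasDerivAt_pow 4 s).inv (pow_ne_zero _ hs0.ne')
      refine (hp.congr_of_eventuallyEq ?_).congr_deriv ?_
      · filter_upwards with y; rw [one_div]; rfl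
      · field_simp; ring
    have h2 : HasDerivAt (fun y : ℝ => 1 / (y + 1/2) ^ 4) (-4 / (s + 1/2) ^ 5) s := by
      have hp := hasDerivAt_one_div_pow (1/2) (x := s) (by linarith) 3
      refine (hp.congr_of_eventuallyEq ?_).congr_deriv ?_
      · filter_upwards with y; norm_num
      · norm_num
    have hD : HasDerivAt Hf (4 / (s + 1/2) ^ 5 - 4 / s ^ 5) s := by
      refine ((h1.sub h2).congr_of_eventuallyEq ?_).congr_deriv (by ring)
      · filter_upwards with y; rw [Hf]; rfl
    rw [hD.deriv]
    have hlt : 4 / (s + 1/2) ^ 5 < 4 / s ^ 5 := by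
      apply div_lt_div_of_pos_left (by norm_num) (by positivity)
      apply pow_lt_pow_left₀ (by linarith) hs0.le
      norm_num
    linarith

lemma term_le {x : ℝ} (hx : 1 ≤ x) (m : ℕ) :
    6 / ((3/2:ℝ) + (m:ℝ)) ^ 4 - 6 / ((1:ℝ) + (m:ℝ)) ^ 4 ≤
      6 / ((x + 1/2) + (m:ℝ)) ^ 4 - 6 / (x + (m:ℝ)) ^ 4 := by
  have hm := Nat.cast_nonneg (α := ℝ) m
  have h := Hf_anti.antitoneOn (a := (1:ℝ) + m) (b := x + m)
    (by simp only [Set.mem_Ioi]; linarith) (by simp only [Set.mem_Ioi]; linarith) (by linarith)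
  simp only [Hf] at h
  have e1 : ((1:ℝ) + m) + 1/2 = 3/2 + m := by ring
  have e2 : (x + (m:ℝ)) + 1/2 = (x + 1/2) + m := by ring
  rw [e1, e2] at h
  have g1 : (6:ℝ) / (3/2 + (m:ℝ)) ^ 4 = 6 * (1 / (3/2 + (m:ℝ)) ^ 4) := (mul_one_div 6 _).symm
  have g2 : (6:ℝ) / ((1:ℝ) + (m:ℝ)) ^ 4 = 6 * (1 / ((1:ℝ) + (m:ℝ)) ^ 4) := (mul_one_div 6 _).symm
  have g3 : (6:ℝ) / ((x + 1/2) + (m:ℝ)) ^ 4 = 6 * (1 / ((x + 1/2) + (m:ℝ)) ^ 4) :=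
    (mul_one_div 6 _).symm
  have g4 : (6:ℝ) / (x + (m:ℝ)) ^ 4 = 6 * (1 / (x + (m:ℝ)) ^ 4) := (mul_one_div 6 _).symm
  rw [g1, g2, g3, g4]
  linarith

lemma term_lt {x : ℝ} (hx : 1 < x) :
    6 / ((3/2:ℝ) + ((0:ℕ):ℝ)) ^ 4 - 6 / ((1:ℝ) + ((0:ℕ):ℝ)) ^ 4 <
      6 / ((x + 1/2) + ((0:ℕ):ℝ)) ^ 4 - 6 / (x + ((0:ℕ):ℝ)) ^ 4 := by
  have h := Hf_anti (a := (1:ℝ)) (b := x)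
    (by simp only [Set.mem_Ioi]; linarith) (by simp only [Set.mem_Ioi]; linarith) hx
  simp only [Hf] at h
  have e1 : (1:ℝ) + 1/2 = 3/2 := by norm_num
  rw [e1] at h
  simp only [Nat.cast_zero, add_zero]
  have g1 : (6:ℝ) / (3/2:ℝ) ^ 4 = 6 * (1 / (3/2:ℝ) ^ 4) := (mul_one_div 6 _).symm
  have g2 : (6:ℝ) / (1:ℝ) ^ 4 = 6 * (1 / (1:ℝ) ^ 4) := (mul_one_div 6 _).symm
  have g3 : (6:ℝ) / (x + 1/2) ^ 4 = 6 * (1 / (x + 1/2) ^ 4) := (mul_one_div 6 _).symm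
  have g4 : (6:ℝ) / x ^ 4 = 6 * (1 / x ^ 4) := (mul_one_div 6 _).symm
  rw [g1, g2, g3, g4]
  linarith

lemma hasSum_A : HasSum (fun m : ℕ => 6 / ((1:ℝ) + (m:ℝ)) ^ 4) (π ^ 4 / 15) := by
  have h0 := hasSum_zeta_four
  have h1 : HasSum (fun n : ℕ => 1 / (((n:ℝ)) + 1) ^ 4) (π ^ 4 / 90) := by
    have h2 : HasSum (fun n : ℕ => 1 / (((n + 1 : ℕ)):ℝ) ^ 4) (π ^ 4 / 90) := by
      apply (hasSum_nat_add_iff (f := fun n : ℕ => 1 / ((n:ℝ)) ^ 4) 1).mpr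
      simpa using h0
    have e : (fun n : ℕ => 1 / (((n + 1 : ℕ)):ℝ) ^ 4) = fun n : ℕ => 1 / (((n:ℝ)) + 1) ^ 4 := by
      funext n; push_cast; ring_nf
    rw [e] at h2
    exact h2
  have h3 := h1.mul_left 6
  have e : (fun n : ℕ => 6 * (1 / ((n:ℝ) + 1) ^ 4)) = fun n : ℕ => 6 / ((1:ℝ) + (n:ℝ)) ^ 4 := by
    funext n; rw [mul_one_div]; ring_nf
  rw [e] at h3
  convert h3 using 1
  · rfl
  ring

lemma hasSum_odd : HasSum (fun k : ℕ => 1 / (2 * (k:ℝ) + 1) ^ 4) (π ^ 4 / 96) := by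
  have heven : HasSum (fun k : ℕ => 1 / ((2 * (k:ℕ) : ℕ):ℝ) ^ 4) (π ^ 4 / 1440) := by
    have h := hasSum_zeta_four.mul_left (1/16)
    have e : (fun n : ℕ => (1/16 : ℝ) * (1 / (n:ℝ) ^ 4)) =
        fun k : ℕ => 1 / ((2 * (k:ℕ) : ℕ):ℝ) ^ 4 := by
      funext k
      rcases Nat.eq_zero_or_pos k with rfl | hk
      · simp
      · have hk0 : ((k:ℝ)) ≠ 0 := Nat.cast_ne_zero.mpr hk.ne'
        push_cast
        field_simp
        ring
    rw [e] at h
    convert h using 1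
    · rfl
    ring
  have hsodd : Summable (fun k : ℕ => 1 / ((2 * (k:ℕ) + 1 : ℕ):ℝ) ^ 4) := by
    have base := summable_one_div_shift (x := 1) one_pos 2
    refine Summable.of_nonneg_of_le (fun k => by positivity) (fun k => ?_) base
    have hm := Nat.cast_nonneg (α := ℝ) k
    apply one_div_le_one_div_of_le (by positivity)
    apply pow_le_pow_left₀ (by positivity)
    push_cast; linarith
  have hodd := hsodd.hasSum
  have hcomb := HasSum.even_add_odd (f := fun n : ℕ => 1 / (n:ℝ) ^ 4) heven hodd
  have huniq : π ^ 4 / 1440 + (∑' k, 1 / ((2 * (k:ℕ) + 1 : ℕ):ℝ) ^ 4) = π ^ 4 / 90 :=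
    hcomb.unique hasSum_zeta_four
  have hval : (∑' k, 1 / ((2 * (k:ℕ) + 1 : ℕ):ℝ) ^ 4) = π ^ 4 / 96 := by linarith
  rw [hval] at hodd
  have e2 : (fun k : ℕ => 1 / ((2 * (k:ℕ) + 1 : ℕ):ℝ) ^ 4) =
      fun k : ℕ => 1 / (2 * (k:ℝ) + 1) ^ 4 := by
    funext k; push_cast; ring_nf
  rw [e2] at hodd
  exact hodd

lemma hasSum_B : HasSum (fun m : ℕ => 6 / ((3/2:ℝ) + (m:ℝ)) ^ 4) (π ^ 4 - 96) := by
  have h1 : HasSum (fun k : ℕ => 1 / (2 * ((k:ℝ) + 1) + 1) ^ 4) (π ^ 4 / 96 - 1) := by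
    have h2 : HasSum (fun k : ℕ => 1 / (2 * (((k + 1 : ℕ)):ℝ) + 1) ^ 4) (π ^ 4 / 96 - 1) := by
      apply (hasSum_nat_add_iff (f := fun k : ℕ => 1 / (2 * (k:ℝ) + 1) ^ 4) 1).mpr
      have : π ^ 4 / 96 - 1 + ∑ i ∈ Finset.range 1, 1 / (2 * (i:ℝ) + 1) ^ 4 = π ^ 4 / 96 := by
        simp
      rw [this]
      exact hasSum_odd
    have e : (fun k : ℕ => 1 / (2 * (((k + 1 : ℕ)):ℝ) + 1) ^ 4) =
        fun k : ℕ => 1 / (2 * ((k:ℝ) + 1) + 1) ^ 4 := by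
      funext k; push_cast; ring_nf
    rw [e] at h2
    exact h2
  have h3 := h1.mul_left 96
  have e : (fun k : ℕ => (96:ℝ) * (1 / (2 * ((k:ℝ) + 1) + 1) ^ 4)) =
      fun m : ℕ => 6 / ((3/2:ℝ) + (m:ℝ)) ^ 4 := by
    funext k
    have hm := Nat.cast_nonneg (α := ℝ) k
    rw [mul_one_div]
    rw [div_eq_div_iff (by positivity) (by positivity)]
    ring
  rw [e] at h3
  convert h3 using 1
  · rfl
  ring

end S19

open S19 in
theorem stmt_19 (x : ℝ) (hx : 1 < x) :
    3 / x ^ 4 + 14 * Real.pi ^ 4 / 15 - 99 <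
      deriv^[3] digamma (x + 1/2) - deriv^[3] digamma x ∧
    deriv^[3] digamma (x + 1/2) - deriv^[3] digamma x < 3 / x ^ 4 := by
  have hx0 : (0:ℝ) < x := by linarith
  have hx5 : (0:ℝ) < x + 1/2 := by linarith
  rw [deriv3_digamma hx0, deriv3_digamma hx5]
  have hsx := summable_T4 hx0
  have hsx5 := summable_T4 hx5
  have hs1 := summable_T4 one_pos
  have hs32 := summable_T4 (by norm_num : (0:ℝ) < 3/2)
  have h3x : 3 / x ^ 4 < 3 := by
    rw [div_lt_iff₀ (by positivity)]
    nlinarith [one_lt_pow₀ hx (show (4:ℕ) ≠ 0 by norm_num)]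
  constructor
  · -- lower bound
    have hsub : T4 (x + 1/2) - T4 x
        = ∑' m : ℕ, (6 / ((x + 1/2) + (m:ℝ)) ^ 4 - 6 / (x + (m:ℝ)) ^ 4) := by
      rw [T4, T4, ← Summable.tsum_sub hsx5 hsx]
    have hbase : (π ^ 4 - 96) - π ^ 4 / 15
        = ∑' m : ℕ, (6 / ((3/2:ℝ) + (m:ℝ)) ^ 4 - 6 / ((1:ℝ) + (m:ℝ)) ^ 4) := by
      rw [Summable.tsum_sub hs32 hs1, hasSum_B.tsum_eq, hasSum_A.tsum_eq]
    have hlt : (π ^ 4 - 96) - π ^ 4 / 15 < T4 (x + 1/2) - T4 x := by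
      rw [hsub, hbase]
      exact Summable.tsum_lt_tsum (term_le hx.le) (term_lt hx) (hs32.sub hs1) (hsx5.sub hsx)
    linarith
  · -- upper bound
    have hT : T4 (x + 1/2) < T4 x := by
      rw [T4, T4]
      refine Summable.tsum_lt_tsum (i := 0) (fun m => ?_) ?_ hsx5 hsx
      · have hm := Nat.cast_nonneg (α := ℝ) m
        apply div_le_div_of_nonneg_left (by norm_num) (by positivity)
        apply pow_le_pow_left₀ (by positivity)
        linarith
      · have : (0:ℝ) < x + ((0:ℕ):ℝ) := by simpa using hx0
        apply div_lt_div_of_pos_left (by norm_num) (by positivity)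
        apply pow_lt_pow_left₀ (by push_cast; linarith) (by simpa using hx0.le)
        norm_num
    have : 0 < 3 / x ^ 4 := by positivity
    linarith
end
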